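/- arXiv:1405.3427 — 2 statements merged into one kernel-verified Lean document; each statement's English description precedes it below -/
import Mathlib

section
/- Let R be an SMLL net. Define a relation ≺ on the links of R by: l₁ ≺ l₂ iff there is a polarized path from l₁ to l₂, i.e. a path of polarized edges (edges whose type is a positive or a negative formula) connecting polarized nodes, going upwards on negative edges and downwards on positive edges, and not entering any box. Then the set of links of R equipped with ≺ is a finite strict partial order (≺ is transitive and irreflexive). -/
/-! # SMLL: multiplicative linear logic with synchronization

Formalization of the proof-structures, correctness criterion, reduction and
multi-token machine (SIAM) of Dal Lago, Faggian, Hasuo, Yoshimizu,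
"The Geometry of Synchronization". -/

/-- SMLL formulas (in negation normal form):
`A ::= 1 | ⊥ | X | X⊥ | A ⊗ A | A ⅋ A`. -/
inductive Formula : Type
  | one : Formula
  | bot : Formula
  | var : ℕ → Formula
  | covar : ℕ → Formula
  | tens : Formula → Formula → Formula
  | parr : Formula → Formula → Formula
  deriving DecidableEq

namespace Formula

/-- Linear negation. -/
def dual : Formula → Formula
  | one => bot
  | bot => one
  | var n => covar n
  | covar n => var n
  | tens A B => parr A.dual B.dual
  | parr A B => tens A.dual B.dual

/-- Positive formulas: `P ::= 1 | P ⊗ P`. -/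
inductive Positive : Formula → Prop
  | one : Positive one
  | tens {A B : Formula} : Positive A → Positive B → Positive (tens A B)

/-- Negative formulas: `N ::= ⊥ | N ⅋ N`. -/
inductive Negative : Formula → Prop
  | bot : Negative bot
  | parr {A B : Formula} : Negative A → Negative B → Negative (parr A B)

/-- A formula is polarized when it is positive or negative. -/
def Polarized (A : Formula) : Prop := Positive A ∨ Negative A

/-- Whether `⊥` occurs in a formula. -/
def hasBotB : Formula → Bool
  | one => false
  | bot => true
  | var _ => false
  | covar _ => false
  | tens A B => hasBotB A || hasBotB B
  | parr A B => hasBotB A || hasBotB B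

/-- Addresses of occurrences inside a formula: `false` = left, `true` = right. -/
abbrev Addr := List Bool

/-- Subformula at a given address (if the address is meaningful). -/
def sub : Formula → Addr → Option Formula
  | A, [] => some A
  | tens A _, false :: m => sub A m
  | tens _ B, true :: m => sub B m
  | parr A _, false :: m => sub A m
  | parr _ B, true :: m => sub B m
  | _, _ :: _ => none

def IsAtom : Formula → Prop
  | one => True
  | bot => True
  | var _ => True
  | covar _ => True
  | tens _ _ => False
  | parr _ _ => False

/-- `m` is the address of an occurrence of an atom in `A`. -/
def AtomOcc (A : Formula) (m : Addr) : Prop := ∃ a, sub A m = some a ∧ IsAtom a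

/-- The atom occurrence at `m` in `A` is positive (it is `1` or `X`). -/
def PosOcc (A : Formula) (m : Addr) : Prop :=
  ∃ a, sub A m = some a ∧ (a = one ∨ ∃ n, a = var n)

/-- The atom occurrence at `m` in `A` is negative (it is `⊥` or `X⊥`). -/
def NegOcc (A : Formula) (m : Addr) : Prop :=
  ∃ a, sub A m = some a ∧ (a = bot ∨ ∃ n, a = covar n)

theorem NegOcc.atomOcc {A : Formula} {m : Addr} (h : NegOcc A m) : AtomOcc A m := by
  obtain ⟨a, ha, h⟩ := h
  refine ⟨a, ha, ?_⟩
  rcases h with rfl | ⟨n, rfl⟩ <;> trivial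

theorem PosOcc.atomOcc {A : Formula} {m : Addr} (h : PosOcc A m) : AtomOcc A m := by
  obtain ⟨a, ha, h⟩ := h
  refine ⟨a, ha, ?_⟩
  rcases h with rfl | ⟨n, rfl⟩ <;> trivial

end Formula

/-- The sorts of links of an SMLL structure. -/
inductive LinkSort : Type
  | ax | cut | tens | parr | one | bot | sync
  deriving DecidableEq

/-- An SMLL proof-structure (with boxes): a finite directed multigraph whose
edges are typed by formulas and whose nodes are links.  Every edge is the
conclusion of exactly one link (its `src`); it is the premiss of the link
`tgt`, if any (edges with no target are the conclusions of the structure).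
`pIdx` indexes an edge among the premisses of its target (for `⊗`/`⅋`-links:
`0` = left, `1` = right; for sync links it pairs premisses with conclusions);
`cIdx` indexes an edge among the conclusions of its source (for sync links,
the `i`-th conclusion corresponds to the `i`-th premiss).  Each `bot`-link is
the lock of a box; `box n` is the innermost box containing the node `n` and
`boxes n` is the set of all boxes containing `n`. -/
structure Struct : Type 1 where
  Edge : Type
  Node : Type
  edgeFintype : Fintype Edge
  nodeFintype : Fintype Node
  edgeDecEq : DecidableEq Edge
  nodeDecEq : DecidableEq Node
  typ : Edge → Formula
  sort : Node → LinkSort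
  src : Edge → Node
  tgt : Edge → Option Node
  pIdx : Edge → ℕ
  cIdx : Edge → ℕ
  box : Node → Option Node
  boxes : Node → Finset Node

attribute [instance] Struct.edgeFintype Struct.nodeFintype
attribute [instance] Struct.edgeDecEq Struct.nodeDecEq

namespace Struct

variable (S : Struct)

/-- The conclusions of a link. -/
def concls (n : S.Node) : Finset S.Edge := Finset.univ.filter fun e => S.src e = n

/-- The premisses of a link. -/
def prems (n : S.Node) : Finset S.Edge := Finset.univ.filter fun e => S.tgt e = some n

/-- The conclusions of the structure. -/
def IsConcl (e : S.Edge) : Prop := S.tgt e = none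

/-- Well-formedness of an SMLL structure: the constraints that the sort of a
link induces on the number and the types of its premisses and conclusions,
together with the coherence of the nesting of boxes. -/
def WF : Prop :=
  (∀ n, S.sort n = .ax → S.prems n = ∅ ∧
    ∃ e f, e ≠ f ∧ S.concls n = {e, f} ∧ S.typ f = (S.typ e).dual) ∧
  (∀ n, S.sort n = .cut → S.concls n = ∅ ∧
    ∃ e f, e ≠ f ∧ S.prems n = {e, f} ∧ S.typ f = (S.typ e).dual) ∧
  (∀ n, S.sort n = .tens → ∃ e f g, e ≠ f ∧ S.prems n = {e, f} ∧
    S.pIdx e = 0 ∧ S.pIdx f = 1 ∧ S.concls n = {g} ∧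
    S.typ g = .tens (S.typ e) (S.typ f)) ∧
  (∀ n, S.sort n = .parr → ∃ e f g, e ≠ f ∧ S.prems n = {e, f} ∧
    S.pIdx e = 0 ∧ S.pIdx f = 1 ∧ S.concls n = {g} ∧
    S.typ g = .parr (S.typ e) (S.typ f)) ∧
  (∀ n, S.sort n = .one → S.prems n = ∅ ∧ ∃ e, S.concls n = {e} ∧ S.typ e = .one) ∧
  (∀ n, S.sort n = .bot → S.prems n = ∅ ∧ ∃ e, S.concls n = {e} ∧ S.typ e = .bot) ∧
  (∀ n, S.sort n = .sync →
    (∀ e ∈ S.prems n, (S.typ e).Polarized) ∧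
    (∀ e ∈ S.prems n, ∃! f, f ∈ S.concls n ∧ S.cIdx f = S.pIdx e) ∧
    (∀ f ∈ S.concls n, ∃! e, e ∈ S.prems n ∧ S.pIdx e = S.cIdx f) ∧
    (∀ e ∈ S.prems n, ∀ f ∈ S.concls n, S.cIdx f = S.pIdx e → S.typ f = S.typ e)) ∧
  (∀ n b, b ∈ S.boxes n → S.sort b = .bot) ∧
  (∀ n, S.box n = none → S.boxes n = ∅) ∧
  (∀ n b, S.box n = some b → b ∉ S.boxes b ∧ S.boxes n = insert b (S.boxes b)) ∧
  (∀ e n, S.tgt e = some n → S.boxes n ⊆ S.boxes (S.src e))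

/-- `b` is the representative of the node `m` in the level-`ℓ` graph (the
graph in which each box strictly below level `ℓ` is collapsed to a single
box-node, identified with its `bot`-link).  For `ℓ = none` this is the
`0`-graph. -/
def RepAt (ℓ : Option S.Node) (m b : S.Node) : Prop :=
  (S.box m = ℓ ∧ b = m) ∨ (b ∈ S.boxes m ∧ S.box b = ℓ)

/-- Edge `e` joins the nodes `u` and `v` (undirectedly) in the level-`ℓ` graph. -/
def ConnectsAt (ℓ : Option S.Node) (e : S.Edge) (u v : S.Node) : Prop :=
  ∃ t, S.tgt e = some t ∧ (S.box t = ℓ ∨ S.box (S.src e) = ℓ) ∧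
    ((S.RepAt ℓ (S.src e) u ∧ S.RepAt ℓ t v) ∨
     (S.RepAt ℓ (S.src e) v ∧ S.RepAt ℓ t u))

/-- The out-edges of a sync link are its positive conclusions and its negative
premisses. -/
def OutEdgeOf (l : S.Node) (e : S.Edge) : Prop :=
  S.sort l = .sync ∧
  ((S.src e = l ∧ (S.typ e).Positive) ∨ (S.tgt e = some l ∧ (S.typ e).Negative))

/-- There is a switching cycle in the level-`ℓ` graph: a cyclic undirected
simple path which uses at most one of the two premisses of each `⅋`-link and
at most one out-edge of each sync link. -/
def SwitchingCycleAt (ℓ : Option S.Node) : Prop :=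
  ∃ (k : ℕ) (v : Fin (k + 1) → S.Node) (e : Fin (k + 1) → S.Edge),
    Function.Injective v ∧ Function.Injective e ∧
    (∀ i, S.ConnectsAt ℓ (e i) (v i) (v (i + 1))) ∧
    (∀ p, S.sort p = .parr → Set.Subsingleton {i | S.tgt (e i) = some p}) ∧
    (∀ l, S.sort l = .sync → Set.Subsingleton {i | S.OutEdgeOf l (e i)})

/-- Correctness criterion: no switching cycle in the `0`-graph, and,
recursively, no switching cycle in the graph of the content of any box. -/
def Correct : Prop := ∀ ℓ : Option S.Node, ¬ S.SwitchingCycleAt ℓ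

/-- A net is a well-formed correct structure. -/
def IsNet : Prop := S.WF ∧ S.Correct

/-! ## Sync paths and hereditary conclusions -/

/-- One step of a sync path: entering a sync link on a premiss and coming out
on the corresponding conclusion. -/
def SyncStepE (e f : S.Edge) : Prop :=
  ∃ l, S.sort l = .sync ∧ S.tgt e = some l ∧ S.src f = l ∧ S.cIdx f = S.pIdx e

/-- `e` is a hereditary conclusion of the link `l`: there is a sync path from
a conclusion of `l` to `e`. -/
def HereditaryConcl (l : S.Node) (e : S.Edge) : Prop :=
  ∃ f, S.src f = l ∧ Relation.ReflTransGen S.SyncStepE f e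

/-- The edge emerges from a box: its source is a `bot`-link (the edge is the
lock of a box) or lies inside some box. -/
def FromBox (e : S.Edge) : Prop := S.sort (S.src e) = .bot ∨ S.box (S.src e) ≠ none

/-- `e` is a hereditary conclusion of a box. -/
def HereditaryBoxConcl (e : S.Edge) : Prop :=
  ∃ f, S.FromBox f ∧ Relation.ReflTransGen S.SyncStepE f e

/-- A ready cut: a cut at depth 0 neither of whose premisses is a hereditary
conclusion of a box. -/
def ReadyCut (c : S.Node) : Prop :=
  S.sort c = .cut ∧ S.box c = none ∧ ∀ e ∈ S.prems c, ¬ S.HereditaryBoxConcl e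

/-! ## Polarized paths and the order on links -/

/-- A node is polarized when all of its conclusions are polarized. -/
def PolarizedNode (n : S.Node) : Prop := ∀ e ∈ S.concls n, (S.typ e).Polarized

/-- A single step of a polarized path from link `a` to link `b` along the
polarized edge `e`: downwards on positive edges, upwards on negative edges,
connecting polarized nodes and never entering boxes. -/
def PolStep (e : S.Edge) (a b : S.Node) : Prop :=
  S.box a = none ∧ S.box b = none ∧ S.PolarizedNode a ∧ S.PolarizedNode b ∧
  (((S.typ e).Positive ∧ S.src e = a ∧ S.tgt e = some b) ∨
   ((S.typ e).Negative ∧ S.tgt e = some a ∧ S.src e = b))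

/-- `a ≺ b` : there is a (simple) polarized path from `a` to `b`. -/
def prec (a b : S.Node) : Prop :=
  ∃ (k : ℕ) (v : Fin (k + 2) → S.Node) (e : Fin (k + 1) → S.Edge),
    v 0 = a ∧ v (Fin.last _) = b ∧
    Function.Injective v ∧ Function.Injective e ∧
    ∀ i : Fin (k + 1), S.PolStep (e i) (v i.castSucc) (v i.succ)

/-- SMLL⁰ structures: no unit links (hence no boxes). -/
def UnitFree : Prop := ∀ n : S.Node, S.sort n ≠ .one ∧ S.sort n ≠ .bot

/-- Closed structures: no `⊥` occurs in the conclusions. -/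
def Closed : Prop := ∀ e : S.Edge, S.tgt e = none → (S.typ e).hasBotB = false

end Struct

/-! ## Reduction -/

/-- A partial injection `j` whose (some-)range is exactly `X`. -/
def PInjOnto {α β : Type*} (j : α → Option β) (X : Set β) : Prop :=
  (∀ a a' b, j a = some b → j a' = some b → a = a') ∧
  (∀ a b, j a = some b → b ∈ X) ∧
  (∀ b ∈ X, ∃ a, j a = some b)

/-- `j` is total. -/
def JTotal {α β : Type*} (j : α → Option β) : Prop := ∀ a, j a ≠ none

/-- The structures `Q` and `R` agree, along the correspondences `jN`, `jE`,
on all edges outside `XE` and all nodes outside `XN`. -/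
def AgreesOn (Q R : Struct) (jN : Q.Node → Option R.Node)
    (jE : Q.Edge → Option R.Edge) (XE : Set R.Edge) (XN : Set R.Node) : Prop :=
  (∀ x y, jE x = some y → y ∉ XE →
    Q.typ x = R.typ y ∧ jN (Q.src x) = some (R.src y) ∧
    (Q.tgt x).bind jN = R.tgt y ∧ Q.pIdx x = R.pIdx y ∧ Q.cIdx x = R.cIdx y) ∧
  (∀ n m, jN n = some m → m ∉ XN →
    Q.sort n = R.sort m ∧ (Q.box n).bind jN = R.box m ∧
    (∀ b b', jN b = some b' → (b ∈ Q.boxes n ↔ b' ∈ R.boxes m)))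

/-- The `ax/cut` step: a cut between a conclusion `v` of an axiom `a` and the
dual premiss is removed together with the axiom; the remaining conclusion `u`
of the axiom and the remaining premiss `q` of the cut are merged. -/
def AxCutStep (R Q : Struct) : Prop :=
  ∃ (a c : R.Node) (v u q : R.Edge),
    R.sort a = .ax ∧ R.sort c = .cut ∧ R.box a = none ∧ R.box c = none ∧
    v ≠ u ∧ v ≠ q ∧ u ≠ q ∧
    R.concls a = {v, u} ∧ R.prems c = {v, q} ∧
    ∃ (jN : Q.Node → Option R.Node) (jE : Q.Edge → Option R.Edge),
      JTotal jN ∧ JTotal jE ∧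
      PInjOnto jN {n | n ≠ a ∧ n ≠ c} ∧
      PInjOnto jE {x | x ≠ v ∧ x ≠ u} ∧
      AgreesOn Q R jN jE {q} ∅ ∧
      (∀ x, jE x = some q →
        Q.typ x = R.typ q ∧ jN (Q.src x) = some (R.src q) ∧
        (Q.tgt x).bind jN = R.tgt u ∧ Q.pIdx x = R.pIdx u ∧ Q.cIdx x = R.cIdx q)

/-- The `⊗/⅋` step: a cut between `A ⊗ B` and `A⊥ ⅋ B⊥` is replaced by two
cuts between the respective premisses. -/
def TensParrStep (R Q : Struct) : Prop :=
  ∃ (c t p : R.Node) (s s' a1 a2 b1 b2 : R.Edge),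
    R.sort c = .cut ∧ R.sort t = .tens ∧ R.sort p = .parr ∧
    R.box c = none ∧ R.box t = none ∧ R.box p = none ∧
    s ≠ s' ∧ R.prems c = {s, s'} ∧ R.concls t = {s} ∧ R.concls p = {s'} ∧
    a1 ≠ a2 ∧ R.prems t = {a1, a2} ∧ R.pIdx a1 = 0 ∧ R.pIdx a2 = 1 ∧
    b1 ≠ b2 ∧ R.prems p = {b1, b2} ∧ R.pIdx b1 = 0 ∧ R.pIdx b2 = 1 ∧
    ∃ (jN : Q.Node → Option R.Node) (jE : Q.Edge → Option R.Edge) (c' : Q.Node),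
      JTotal jE ∧
      PInjOnto jN {n | n ≠ t ∧ n ≠ p} ∧
      PInjOnto jE {x | x ≠ s ∧ x ≠ s'} ∧
      jN c' = none ∧ (∀ n, jN n = none → n = c') ∧
      Q.sort c' = .cut ∧ Q.box c' = none ∧ Q.boxes c' = ∅ ∧
      AgreesOn Q R jN jE {a1, a2, b1, b2} ∅ ∧
      (∀ x y, jE x = some y → y = a1 ∨ y = b1 →
        Q.typ x = R.typ y ∧ jN (Q.src x) = some (R.src y) ∧
        (Q.tgt x).bind jN = some c ∧ Q.cIdx x = R.cIdx y) ∧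
      (∀ x y, jE x = some y → y = a2 ∨ y = b2 →
        Q.typ x = R.typ y ∧ jN (Q.src x) = some (R.src y) ∧
        Q.tgt x = some c' ∧ Q.cIdx x = R.cIdx y)

/-- Commutation of a sync link with a `⊗` or `⅋` link: the sync link acting
on the conclusion `z` of the multiplicative link `m` (with corresponding sync
conclusion `w`) is pushed above `m`, now acting on the two premisses `x`, `y`
of `m` via two fresh sync positions (indices `i₁`, `i₂`) with fresh edges
`x'`, `y'`. -/
def SyncMultStep (R Q : Struct) : Prop :=
  ∃ (l m : R.Node) (z w x y : R.Edge) (i₁ i₂ : ℕ),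
    R.sort l = .sync ∧ (R.sort m = .tens ∨ R.sort m = .parr) ∧
    R.box l = none ∧ R.box m = none ∧
    R.src z = m ∧ R.tgt z = some l ∧ R.src w = l ∧ R.cIdx w = R.pIdx z ∧
    x ≠ y ∧ R.prems m = {x, y} ∧ R.pIdx x = 0 ∧ R.pIdx y = 1 ∧
    i₁ ≠ i₂ ∧
    (∀ e, R.tgt e = some l → R.pIdx e ≠ i₁ ∧ R.pIdx e ≠ i₂) ∧
    (∀ e, R.src e = l → R.cIdx e ≠ i₁ ∧ R.cIdx e ≠ i₂) ∧
    ∃ (jN : Q.Node → Option R.Node) (jE : Q.Edge → Option R.Edge)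
      (l' m' : Q.Node) (x' y' : Q.Edge),
      JTotal jN ∧ PInjOnto jN Set.univ ∧
      PInjOnto jE {e | e ≠ z} ∧
      jN l' = some l ∧ jN m' = some m ∧
      x' ≠ y' ∧ jE x' = none ∧ jE y' = none ∧ (∀ e, jE e = none → e = x' ∨ e = y') ∧
      AgreesOn Q R jN jE {x, y, w} ∅ ∧
      (∀ e, jE e = some x →
        Q.typ e = R.typ x ∧ jN (Q.src e) = some (R.src x) ∧
        Q.tgt e = some l' ∧ Q.pIdx e = i₁ ∧ Q.cIdx e = R.cIdx x) ∧
      (∀ e, jE e = some y →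
        Q.typ e = R.typ y ∧ jN (Q.src e) = some (R.src y) ∧
        Q.tgt e = some l' ∧ Q.pIdx e = i₂ ∧ Q.cIdx e = R.cIdx y) ∧
      (∀ e, jE e = some w →
        Q.typ e = R.typ w ∧ Q.src e = m' ∧
        (Q.tgt e).bind jN = R.tgt w ∧ Q.pIdx e = R.pIdx w ∧ Q.cIdx e = R.cIdx w) ∧
      (Q.typ x' = R.typ x ∧ Q.src x' = l' ∧ Q.tgt x' = some m' ∧
        Q.pIdx x' = 0 ∧ Q.cIdx x' = i₁) ∧
      (Q.typ y' = R.typ y ∧ Q.src y' = l' ∧ Q.tgt y' = some m' ∧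
        Q.pIdx y' = 1 ∧ Q.cIdx y' = i₂)

/-- Commutation of a sync link with an axiom: a sync link acting on a
positive conclusion `u` of an axiom (with corresponding conclusion `u'`) is
moved to the axiom's other conclusion `v` (of type `P⊥`), with a fresh sync
position of index `j` and fresh edge `v'`. -/
def SyncAxStep (R Q : Struct) : Prop :=
  ∃ (l a : R.Node) (u u' v : R.Edge) (j : ℕ),
    R.sort l = .sync ∧ R.sort a = .ax ∧ R.box l = none ∧ R.box a = none ∧
    (R.typ u).Positive ∧ u ≠ v ∧ R.concls a = {u, v} ∧
    R.tgt u = some l ∧ R.src u' = l ∧ R.cIdx u' = R.pIdx u ∧ u' ≠ u ∧ u' ≠ v ∧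
    (∀ e, R.tgt e = some l → R.pIdx e ≠ j) ∧
    (∀ e, R.src e = l → R.cIdx e ≠ j) ∧
    ∃ (jN : Q.Node → Option R.Node) (jE : Q.Edge → Option R.Edge)
      (l' a' : Q.Node) (v' : Q.Edge),
      JTotal jN ∧ PInjOnto jN Set.univ ∧ PInjOnto jE {e | e ≠ u} ∧
      jN l' = some l ∧ jN a' = some a ∧
      jE v' = none ∧ (∀ e, jE e = none → e = v') ∧
      AgreesOn Q R jN jE {u', v} ∅ ∧
      (∀ e, jE e = some u' →
        Q.typ e = R.typ u' ∧ Q.src e = a' ∧ Q.cIdx e = R.cIdx u ∧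
        (Q.tgt e).bind jN = R.tgt u' ∧ Q.pIdx e = R.pIdx u') ∧
      (∀ e, jE e = some v →
        Q.typ e = R.typ v ∧ Q.src e = a' ∧ Q.cIdx e = R.cIdx v ∧
        Q.tgt e = some l' ∧ Q.pIdx e = j) ∧
      (Q.typ v' = R.typ v ∧ Q.src v' = l' ∧ Q.cIdx v' = j ∧
        (Q.tgt v').bind jN = R.tgt v ∧ Q.pIdx v' = R.pIdx v)

/-- Commutation of a sync link with a cut: a sync link acting on the premiss
`d'` (of negative type `P⊥`) of a cut is moved to the other premiss `q`. -/
def SyncCutStep (R Q : Struct) : Prop :=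
  ∃ (l c : R.Node) (d d' q : R.Edge) (j : ℕ),
    R.sort l = .sync ∧ R.sort c = .cut ∧ R.box l = none ∧ R.box c = none ∧
    (R.typ d').Negative ∧
    R.src d' = l ∧ R.tgt d' = some c ∧ R.tgt d = some l ∧ R.pIdx d = R.cIdx d' ∧
    d' ≠ q ∧ d ≠ q ∧ d ≠ d' ∧ R.prems c = {d', q} ∧
    (∀ e, R.tgt e = some l → R.pIdx e ≠ j) ∧
    (∀ e, R.src e = l → R.cIdx e ≠ j) ∧
    ∃ (jN : Q.Node → Option R.Node) (jE : Q.Edge → Option R.Edge)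
      (l' c' : Q.Node) (q' : Q.Edge),
      JTotal jN ∧ PInjOnto jN Set.univ ∧ PInjOnto jE {e | e ≠ d'} ∧
      jN l' = some l ∧ jN c' = some c ∧
      jE q' = none ∧ (∀ e, jE e = none → e = q') ∧
      AgreesOn Q R jN jE {d, q} ∅ ∧
      (∀ e, jE e = some d →
        Q.typ e = R.typ d ∧ jN (Q.src e) = some (R.src d) ∧ Q.cIdx e = R.cIdx d ∧
        Q.tgt e = some c' ∧ Q.pIdx e = R.pIdx d') ∧
      (∀ e, jE e = some q →
        Q.typ e = R.typ q ∧ jN (Q.src e) = some (R.src q) ∧ Q.cIdx e = R.cIdx q ∧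
        Q.tgt e = some l' ∧ Q.pIdx e = j) ∧
      (Q.typ q' = R.typ q ∧ Q.src q' = l' ∧ Q.cIdx q' = j ∧
        Q.tgt q' = some c' ∧ Q.pIdx q' = R.pIdx q)

/-- Sync elimination: a sync link all of whose premisses are conclusions of
`one`-links is erased, merging each premiss with its corresponding
conclusion. -/
def SyncElimStep (R Q : Struct) : Prop :=
  ∃ l : R.Node, R.sort l = .sync ∧ R.box l = none ∧
    (∀ e ∈ R.prems l, R.sort (R.src e) = .one) ∧
    ∃ (jN : Q.Node → Option R.Node) (jE : Q.Edge → Option R.Edge),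
      JTotal jN ∧ JTotal jE ∧
      PInjOnto jN {n | n ≠ l} ∧
      PInjOnto jE {e | R.src e ≠ l} ∧
      AgreesOn Q R jN jE {e | R.tgt e = some l} ∅ ∧
      (∀ x e f, jE x = some e → R.tgt e = some l → R.src f = l →
        R.cIdx f = R.pIdx e →
        Q.typ x = R.typ e ∧ jN (Q.src x) = some (R.src e) ∧
        (Q.tgt x).bind jN = R.tgt f ∧ Q.pIdx x = R.pIdx f ∧ Q.cIdx x = R.cIdx e)

/-- The `one/⊥` step (box opening): a cut between the conclusion `o` of a
`one`-link `n₁` and the lock `k` of a box `b` removes the cut, the `one`-link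
and the `bot`-link, and opens the box. -/
def OneBotStep (R Q : Struct) : Prop :=
  ∃ (c n₁ b : R.Node) (o k : R.Edge),
    R.sort c = .cut ∧ R.sort n₁ = .one ∧ R.sort b = .bot ∧
    R.box c = none ∧ R.box n₁ = none ∧ R.box b = none ∧
    o ≠ k ∧ R.prems c = {o, k} ∧ R.src o = n₁ ∧ R.src k = b ∧
    ∃ (jN : Q.Node → Option R.Node) (jE : Q.Edge → Option R.Edge),
      JTotal jN ∧ JTotal jE ∧
      PInjOnto jN {n | n ≠ c ∧ n ≠ n₁ ∧ n ≠ b} ∧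
      PInjOnto jE {e | e ≠ o ∧ e ≠ k} ∧
      (∀ x e, jE x = some e →
        Q.typ x = R.typ e ∧ jN (Q.src x) = some (R.src e) ∧
        (Q.tgt x).bind jN = R.tgt e ∧ Q.pIdx x = R.pIdx e ∧ Q.cIdx x = R.cIdx e) ∧
      (∀ n m, jN n = some m →
        Q.sort n = R.sort m ∧
        (∀ b₀ b₀', jN b₀ = some b₀' → (b₀ ∈ Q.boxes n ↔ b₀' ∈ R.boxes m ∧ b₀' ≠ b)) ∧
        (R.box m = some b → Q.box n = none) ∧
        (R.box m ≠ some b → (Q.box n).bind jN = R.box m))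

/-- The sync-commutation and sync-elimination steps. -/
def SyncRed (R Q : Struct) : Prop :=
  SyncMultStep R Q ∨ SyncAxStep R Q ∨ SyncCutStep R Q ∨ SyncElimStep R Q

/-- The reduction relation `→` on SMLL structures (applied at depth 0 only). -/
def Step (R Q : Struct) : Prop :=
  AxCutStep R Q ∨ TensParrStep R Q ∨ SyncRed R Q ∨ OneBotStep R Q

/-- Isomorphism of structures. -/
def Isom (R Q : Struct) : Prop :=
  ∃ (en : R.Node ≃ Q.Node) (ee : R.Edge ≃ Q.Edge),
    (∀ e, Q.typ (ee e) = R.typ e) ∧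
    (∀ e, Q.src (ee e) = en (R.src e)) ∧
    (∀ e, Q.tgt (ee e) = (R.tgt e).map en) ∧
    (∀ e, Q.pIdx (ee e) = R.pIdx e) ∧
    (∀ e, Q.cIdx (ee e) = R.cIdx e) ∧
    (∀ n, Q.sort (en n) = R.sort n) ∧
    (∀ n, Q.box (en n) = (R.box n).map en) ∧
    (∀ n, Q.boxes (en n) = (R.boxes n).image en)

/-! ## The SIAM: a synchronous interaction abstract machine -/

namespace Struct

variable (S : Struct)

/-- The value of a token: either an occurrence of an atom on an edge, or a
position `(e, i)` on the lock `e` of a box (`BOTBOX`). -/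
inductive PosVal (S : Struct) : Type
  | atom : S.Edge → Formula.Addr → PosVal S
  | lock : S.Edge → ℕ → PosVal S

/-- Initial positions: negative atom occurrences in the conclusions. -/
def InitPos (p : S.Edge × Formula.Addr) : Prop :=
  S.tgt p.1 = none ∧ Formula.NegOcc (S.typ p.1) p.2

/-- Final positions: positive atom occurrences in the conclusions. -/
def FinPos (p : S.Edge × Formula.Addr) : Prop :=
  S.tgt p.1 = none ∧ Formula.PosOcc (S.typ p.1) p.2

/-- One positions: conclusions of `one`-links. -/
def OnePos (p : S.Edge × Formula.Addr) : Prop :=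
  S.sort (S.src p.1) = .one ∧ p.2 = []

/-- Valid token values: genuine atom occurrences, or positions on the lock of
a box. -/
def ValidVal : PosVal S → Prop
  | .atom e m => Formula.AtomOcc (S.typ e) m
  | .lock e _ => S.sort (S.src e) = .bot

end Struct

/-- A state of the SIAM machine `M_S`: a (partial) function from
`INIT(S) ∪ L` (with `L ⊆ ONES(S)`) to the positions of `S`; it records, for
each token, its origin and its current position. -/
structure SState (S : Struct) where
  f : S.Edge × Formula.Addr → Option (Struct.PosVal S)
  dom_subset : ∀ p, f p ≠ none → S.InitPos p ∨ S.OnePos p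
  init_total : ∀ p, S.InitPos p → f p ≠ none
  val_valid : ∀ p v, f p = some v → S.ValidVal v

namespace Struct

variable (S : Struct)

/-- The box `b` is unlocked in state `T`: some token sits on its lock. -/
def Unlocked (T : SState S) (b : S.Node) : Prop :=
  ∃ p e i, T.f p = some (.lock e i) ∧ S.src e = b

/-- A link is active: all the boxes containing it are unlocked. -/
def Active (T : SState S) (n : S.Node) : Prop :=
  ∀ b ∈ S.boxes n, S.Unlocked T b

end Struct

open Classical in
/-- The initial state `I_S`: the identity on the initial positions. -/
noncomputable def initState (S : Struct) : SState S where
  f := fun p => if S.InitPos p then some (.atom p.1 p.2) else none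
  dom_subset := by
    intro p hp
    by_cases h : S.InitPos p
    · exact Or.inl h
    · simp [h] at hp
  init_total := by intro p hp; simp [hp]
  val_valid := by
    intro p v hv
    by_cases h : S.InitPos p
    · simp only [if_pos h, Option.some.injEq] at hv
      subst hv
      exact h.2.atomOcc
    · simp [h] at hv

/-- The transition relation of the SIAM.  Tokens on negative atom occurrences
move upwards, tokens on positive atom occurrences move downwards; all tokens
cross a sync link simultaneously, when each of its in-edges is saturated;
active `one`-links may spawn a token; a token reaching the lock of a box
unlocks it.  Tokens may only cross active links (so they can enter a box only
when it is unlocked). -/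
inductive STrans (S : Struct) : SState S → SState S → Prop
  | axUp {T T' : SState S} {p : S.Edge × Formula.Addr} {e e' : S.Edge}
      {m : Formula.Addr} {a : S.Node} :
      T.f p = some (.atom e m) →
      Formula.NegOcc (S.typ e) m →
      S.src e = a → S.sort a = .ax → S.Active T a →
      S.src e' = a → e' ≠ e →
      (∀ q, q ≠ p → T'.f q = T.f q) →
      T'.f p = some (.atom e' m) →
      STrans S T T'
  | cutDown {T T' : SState S} {p : S.Edge × Formula.Addr} {e e' : S.Edge}
      {m : Formula.Addr} {c : S.Node} :
      T.f p = some (.atom e m) →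
      Formula.PosOcc (S.typ e) m →
      S.tgt e = some c → S.sort c = .cut → S.Active T c →
      S.tgt e' = some c → e' ≠ e →
      (∀ q, q ≠ p → T'.f q = T.f q) →
      T'.f p = some (.atom e' m) →
      STrans S T T'
  | multDown {T T' : SState S} {p : S.Edge × Formula.Addr} {e g : S.Edge}
      {m : Formula.Addr} {n : S.Node} {b : Bool} :
      T.f p = some (.atom e m) →
      Formula.PosOcc (S.typ e) m →
      S.tgt e = some n → (S.sort n = .tens ∨ S.sort n = .parr) → S.Active T n →
      S.src g = n →
      S.pIdx e = (if b then 1 else 0) →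
      (∀ q, q ≠ p → T'.f q = T.f q) →
      T'.f p = some (.atom g (b :: m)) →
      STrans S T T'
  | multUp {T T' : SState S} {p : S.Edge × Formula.Addr} {e g : S.Edge}
      {m : Formula.Addr} {n : S.Node} {b : Bool} :
      T.f p = some (.atom g (b :: m)) →
      Formula.NegOcc (S.typ g) (b :: m) →
      S.src g = n → (S.sort n = .tens ∨ S.sort n = .parr) → S.Active T n →
      S.tgt e = some n →
      S.pIdx e = (if b then 1 else 0) →
      (∀ q, q ≠ p → T'.f q = T.f q) →
      T'.f p = some (.atom e m) →
      STrans S T T'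
  | lockTok {T T' : SState S} {p : S.Edge × Formula.Addr} {e : S.Edge}
      {b' : S.Node} :
      T.f p = some (.atom e []) →
      S.typ e = .bot →
      S.src e = b' → S.sort b' = .bot → S.Active T b' →
      (∀ q, q ≠ p → T'.f q = T.f q) →
      T'.f p = some (.lock e 0) →
      STrans S T T'
  | oneSpawn {T T' : SState S} {n : S.Node} {e : S.Edge} :
      S.sort n = .one → S.Active T n → S.src e = n →
      T.f (e, []) = none →
      (∀ q, q ≠ (e, []) → T'.f q = T.f q) →
      T'.f (e, []) = some (.atom e []) →
      STrans S T T'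
  | syncCross {T T' : SState S} {l : S.Node} :
      S.sort l = .sync → S.Active T l →
      (∃ q e m, T.f q = some (.atom e m) ∧
        ((S.tgt e = some l ∧ (S.typ e).Positive) ∨
         (S.src e = l ∧ (S.typ e).Negative))) →
      (∀ e, ((S.tgt e = some l ∧ (S.typ e).Positive) ∨
             (S.src e = l ∧ (S.typ e).Negative)) →
        ∀ m, Formula.AtomOcc (S.typ e) m → ∃ q, T.f q = some (.atom e m)) →
      (∀ q e m, T.f q = some (.atom e m) → S.tgt e = some l → (S.typ e).Positive →
        ∃ e', S.src e' = l ∧ S.cIdx e' = S.pIdx e ∧ T'.f q = some (.atom e' m)) →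
      (∀ q e m, T.f q = some (.atom e m) → S.src e = l → (S.typ e).Negative →
        ∃ e', S.tgt e' = some l ∧ S.pIdx e' = S.cIdx e ∧ T'.f q = some (.atom e' m)) →
      (∀ q, (∀ e m, T.f q = some (.atom e m) →
          ¬(S.tgt e = some l ∧ (S.typ e).Positive) ∧
          ¬(S.src e = l ∧ (S.typ e).Negative)) →
        T'.f q = T.f q) →
      STrans S T T'

/-- A final state: its image consists of all the final positions together
with positions on the locks of boxes. -/
def SState.Final {S : Struct} (T : SState S) : Prop :=
  (∀ q v, T.f q = some v →
    (∃ e m, v = .atom e m ∧ S.FinPos (e, m)) ∨ (∃ e i, v = .lock e i)) ∧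
  (∀ e m, S.FinPos (e, m) → ∃ q, T.f q = some (.atom e m))

/-- The machine of `S` deadlocks: some maximal transition sequence from the
initial state ends in a non-final state. -/
def Deadlocks (S : Struct) : Prop :=
  ∃ T : SState S, Relation.ReflTransGen (STrans S) (initState S) T ∧
    (∀ T', ¬ STrans S T T') ∧ ¬ T.Final

/-- The machine of `S` is deadlock free: every maximal transition sequence
from the initial state ends in a final state. -/
def DeadlockFree (S : Struct) : Prop :=
  ∀ T : SState S, Relation.ReflTransGen (STrans S) (initState S) T →
    (∀ T', ¬ STrans S T T') → T.Final

/-! ## The closure of a net -/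

/-- A structure with a designated (main) conclusion. -/
structure PNet : Type 1 where
  S : Struct
  main : S.Edge

/-- The net consisting of a single `one`-link. -/
def oneNet : PNet where
  S :=
    { Edge := Unit
      Node := Unit
      edgeFintype := inferInstance
      nodeFintype := inferInstance
      edgeDecEq := inferInstance
      nodeDecEq := inferInstance
      typ := fun _ => .one
      sort := fun _ => .one
      src := fun _ => ()
      tgt := fun _ => none
      pIdx := fun _ => 0
      cIdx := fun _ => 0
      box := fun _ => none
      boxes := fun _ => ∅ }
  main := ()

/-- The net consisting of a single axiom of conclusions `A⊥, A`, with main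
conclusion `A`. -/
def axNet (A : Formula) : PNet where
  S :=
    { Edge := Bool
      Node := Unit
      edgeFintype := inferInstance
      nodeFintype := inferInstance
      edgeDecEq := inferInstance
      nodeDecEq := inferInstance
      typ := fun e => if e then A else A.dual
      sort := fun _ => .ax
      src := fun _ => ()
      tgt := fun _ => none
      pIdx := fun _ => 0
      cIdx := fun e => if e then 1 else 0
      box := fun _ => none
      boxes := fun _ => ∅ }
  main := true

/-- Joining the main conclusions of two nets by a binary link of sort `s`
and conclusion type `C`. -/
def joinNet (s : LinkSort) (C : Formula) (P Q : PNet) : PNet where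
  S :=
    { Edge := Option (P.S.Edge ⊕ Q.S.Edge)
      Node := Option (P.S.Node ⊕ Q.S.Node)
      edgeFintype := inferInstance
      nodeFintype := inferInstance
      edgeDecEq := inferInstance
      nodeDecEq := inferInstance
      typ := fun e =>
        match e with
        | none => C
        | some (.inl x) => P.S.typ x
        | some (.inr y) => Q.S.typ y
      sort := fun n =>
        match n with
        | none => s
        | some (.inl x) => P.S.sort x
        | some (.inr y) => Q.S.sort y
      src := fun e =>
        match e with
        | none => none
        | some (.inl x) => some (.inl (P.S.src x))
        | some (.inr y) => some (.inr (Q.S.src y))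
      tgt := fun e =>
        match e with
        | none => none
        | some (.inl x) =>
            if x = P.main then some none
            else (P.S.tgt x).map fun n => some (.inl n)
        | some (.inr y) =>
            if y = Q.main then some none
            else (Q.S.tgt y).map fun n => some (.inr n)
      pIdx := fun e =>
        match e with
        | none => 0
        | some (.inl x) => if x = P.main then 0 else P.S.pIdx x
        | some (.inr y) => if y = Q.main then 1 else Q.S.pIdx y
      cIdx := fun e =>
        match e with
        | none => 0
        | some (.inl x) => P.S.cIdx x
        | some (.inr y) => Q.S.cIdx y
      box := fun n =>
        match n with
        | none => none
        | some (.inl x) => (P.S.box x).map fun m => some (.inl m)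
        | some (.inr y) => (Q.S.box y).map fun m => some (.inr m)
      boxes := fun n =>
        match n with
        | none => ∅
        | some (.inl x) => (P.S.boxes x).image fun m => some (.inl m)
        | some (.inr y) => (Q.S.boxes y).image fun m => some (.inr m) }
  main := none

/-- The net `R°(A)`, by induction on `A`: it has conclusions `Γ, A` with no
occurrence of `⊥` in `Γ`, and main conclusion `A`. -/
def circNet : Formula → PNet
  | .one => oneNet
  | .bot => axNet .bot
  | .var n => axNet (.var n)
  | .covar n => axNet (.covar n)
  | .tens A B => joinNet .tens (.tens A B) (circNet A) (circNet B)
  | .parr A B => joinNet .parr (.parr A B) (circNet A) (circNet B)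

/-- The conclusions of `R` containing an occurrence of `⊥`. -/
abbrev BadC (R : Struct) :=
  {e : R.Edge // R.tgt e = none ∧ (R.typ e).hasBotB = true}

/-- The closure `R̂` of `R`: each conclusion `A` of `R` containing `⊥` is cut
against the main conclusion of a copy of `R°(A⊥)`. -/
def netClosure (R : Struct) : Struct where
  Edge := R.Edge ⊕ Σ e : BadC R, (circNet (R.typ e.val).dual).S.Edge
  Node := R.Node ⊕ ((Σ e : BadC R, (circNet (R.typ e.val).dual).S.Node) ⊕ BadC R)
  edgeFintype := inferInstance
  nodeFintype := inferInstance
  edgeDecEq := inferInstance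
  nodeDecEq := inferInstance
  typ := fun e =>
    match e with
    | .inl e => R.typ e
    | .inr ⟨b, x⟩ => (circNet (R.typ b.val).dual).S.typ x
  sort := fun n =>
    match n with
    | .inl n => R.sort n
    | .inr (.inl ⟨b, x⟩) => (circNet (R.typ b.val).dual).S.sort x
    | .inr (.inr _) => .cut
  src := fun e =>
    match e with
    | .inl e => .inl (R.src e)
    | .inr ⟨b, x⟩ => .inr (.inl ⟨b, (circNet (R.typ b.val).dual).S.src x⟩)
  tgt := fun e =>
    match e with
    | .inl e =>
        if h : R.tgt e = none ∧ (R.typ e).hasBotB = true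
        then some (.inr (.inr ⟨e, h⟩))
        else (R.tgt e).map Sum.inl
    | .inr ⟨b, x⟩ =>
        if x = (circNet (R.typ b.val).dual).main
        then some (.inr (.inr b))
        else ((circNet (R.typ b.val).dual).S.tgt x).map fun n => .inr (.inl ⟨b, n⟩)
  pIdx := fun e =>
    match e with
    | .inl e => R.pIdx e
    | .inr ⟨b, x⟩ =>
        if x = (circNet (R.typ b.val).dual).main then 1
        else (circNet (R.typ b.val).dual).S.pIdx x
  cIdx := fun e =>
    match e with
    | .inl e => R.cIdx e
    | .inr ⟨b, x⟩ => (circNet (R.typ b.val).dual).S.cIdx x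
  box := fun n =>
    match n with
    | .inl n => (R.box n).map Sum.inl
    | .inr (.inl ⟨b, x⟩) =>
        ((circNet (R.typ b.val).dual).S.box x).map fun m => .inr (.inl ⟨b, m⟩)
    | .inr (.inr _) => none
  boxes := fun n =>
    match n with
    | .inl n => (R.boxes n).image Sum.inl
    | .inr (.inl ⟨b, x⟩) =>
        ((circNet (R.typ b.val).dual).S.boxes x).image fun m => .inr (.inl ⟨b, m⟩)
    | .inr (.inr _) => ∅

section LinksOrderAux

open Formula

variable {R : Struct}

private lemma pos_neg_false {A : Formula} (h : A.Positive) (h' : A.Negative) : False := by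
  cases h <;> cases h'

private lemma polStep_det {e : R.Edge} {a b a' b' : R.Node}
    (h : R.PolStep e a b) (h' : R.PolStep e a' b') : a = a' ∧ b = b' := by
  obtain ⟨_, _, _, _, hd⟩ := h
  obtain ⟨_, _, _, _, hd'⟩ := h'
  rcases hd with ⟨hp, hs, ht⟩ | ⟨hn, ht, hs⟩ <;>
    rcases hd' with ⟨hp', hs', ht'⟩ | ⟨hn', ht', hs'⟩
  · exact ⟨hs.symm.trans hs', Option.some_inj.mp (ht.symm.trans ht')⟩
  · exact absurd hp (fun h => pos_neg_false h hn')
  · exact absurd hp' (fun h => pos_neg_false h hn)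
  · exact ⟨Option.some_inj.mp (ht.symm.trans ht'), hs.symm.trans hs'⟩

private lemma polStep_connects {e : R.Edge} {a b : R.Node}
    (h : R.PolStep e a b) : R.ConnectsAt none e a b := by
  obtain ⟨hba, hbb, _, _, hd⟩ := h
  rcases hd with ⟨hp, hs, ht⟩ | ⟨hn, ht, hs⟩
  · exact ⟨b, ht, Or.inl hbb,
      Or.inl ⟨Or.inl ⟨by rw [hs]; exact hba, hs.symm⟩, Or.inl ⟨hbb, rfl⟩⟩⟩
  · exact ⟨a, ht, Or.inl hba,
      Or.inr ⟨Or.inl ⟨by rw [hs]; exact hbb, hs.symm⟩, Or.inl ⟨hba, rfl⟩⟩⟩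

/-- A polarized walk of length `n` indexed by naturals. -/
private def NWalk (R : Struct) (v : ℕ → R.Node) (e : ℕ → R.Edge) (n : ℕ) : Prop :=
  ∀ i, i < n → R.PolStep (e i) (v i) (v (i + 1))

private lemma walk_of_prec {a b : R.Node} (h : R.prec a b) :
    ∃ n v e, 0 < n ∧ NWalk R v e n ∧ v 0 = a ∧ v n = b := by
  obtain ⟨k, V, E, h0, hl, _, _, hstep⟩ := h
  refine ⟨k + 1, fun m => V ⟨min m (k + 1), by omega⟩, fun m => E ⟨min m k, by omega⟩,
    Nat.succ_pos _, ?_, ?_, ?_⟩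
  · intro i hi
    have := hstep ⟨i, hi⟩
    have h1 : (⟨min i (k+1), by omega⟩ : Fin (k+2)) = (⟨i, hi⟩ : Fin (k+1)).castSucc := by
      ext; simp [Fin.castSucc, Fin.castAdd, Fin.castLE]; omega
    have h2 : (⟨min (i+1) (k+1), by omega⟩ : Fin (k+2)) = (⟨i, hi⟩ : Fin (k+1)).succ := by
      ext; simp [Fin.succ]; omega
    have h3 : (⟨min i k, by omega⟩ : Fin (k+1)) = (⟨i, hi⟩ : Fin (k+1)) := by
      ext; simp; omega
    beta_reduce
    rw [h1, h2, h3]; exact this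
  · have h4 : (⟨min 0 (k+1), by omega⟩ : Fin (k+2)) = 0 := by ext; simp
    beta_reduce
    rw [h4]; exact h0
  · have h4 : (⟨min (k+1) (k+1), by omega⟩ : Fin (k+2)) = Fin.last (k+1) := by
      ext; simp [Fin.last]
    beta_reduce
    rw [h4]; exact hl

private lemma prec_of_walk :
    ∀ n v e, NWalk R v e n → v 0 ≠ v n → R.prec (v 0) (v n) := by
  intro n
  induction n using Nat.strong_induction_on with
  | _ n IH =>
    intro v e hw hne
    by_cases hrep : ∃ i j, i < j ∧ j ≤ n ∧ v i = v j
    · -- splice out the repetition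
      obtain ⟨i, j, hij, hjn, hvij⟩ := hrep
      set d := j - i with hd
      have hid : i + d = j := by omega
      have hdpos : 0 < d := by omega
      have hdn : d ≤ n := by omega
      set v' : ℕ → R.Node := fun m => if m ≤ i then v m else v (m + d) with hv'
      set e' : ℕ → R.Edge := fun m => if m < i then e m else e (m + d) with he'
      have hvi : v' i = v (i + d) := by simp [hv', hid, ← hvij]
      have hw' : NWalk R v' e' (n - d) := by
        intro m hm
        by_cases hmi : m < i
        · have h1 : v' m = v m := by simp [hv', le_of_lt hmi]
          have h2 : v' (m + 1) = v (m + 1) := by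
            simp only [hv']; rw [if_pos (by omega)]
          have h3 : e' m = e m := by simp [he', hmi]
          rw [h1, h2, h3]; exact hw m (by omega)
        · have h1 : v' m = v (m + d) := by
            by_cases hmi' : m = i
            · subst hmi'; exact hvi
            · simp only [hv']; rw [if_neg (by omega)]
          have h2 : v' (m + 1) = v (m + 1 + d) := by
            simp only [hv']; rw [if_neg (by omega)]
          have h3 : e' m = e (m + d) := by simp [he', hmi]
          rw [h1, h2, h3]
          have : m + 1 + d = m + d + 1 := by omega
          rw [this]
          exact hw (m + d) (by omega)
      have h0 : v' 0 = v 0 := by simp [hv']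
      have hn' : v' (n - d) = v n := by
        by_cases hni : n - d ≤ i
        · have : n - d = i := by omega
          rw [this, hvi]
          congr 1; omega
        · simp only [hv']; rw [if_neg hni]; congr 1; omega
      have := IH (n - d) (by omega) v' e' hw' (by rw [h0, hn']; exact hne)
      rwa [h0, hn'] at this
    · -- v is injective on [0, n]
      push_neg at hrep
      have hinj : ∀ p q, p ≤ n → q ≤ n → v p = v q → p = q := by
        intro p q hp hq hvpq
        rcases lt_trichotomy p q with h | h | h
        · exact absurd hvpq (hrep p q h hq)
        · exact h
        · exact absurd hvpq.symm (hrep q p h hp)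
      have hn0 : n ≠ 0 := fun h => hne (by rw [h])
      obtain ⟨k, rfl⟩ : ∃ k, n = k + 1 := ⟨n - 1, by omega⟩
      refine ⟨k, fun m => v m.val, fun m => e m.val, rfl, rfl, ?_, ?_, ?_⟩
      · intro p q h
        exact Fin.ext (hinj p.val q.val (by omega) (by omega) h)
      · intro p q h
        have hp := hw p.val (by omega)
        have hq := hw q.val (by omega)
        have h' : e p.val = e q.val := h
        rw [h'] at hp
        obtain ⟨h1, _⟩ := polStep_det hp hq
        exact Fin.ext (hinj p.val q.val (by omega) (by omega) h1)
      · intro m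
        exact hw m.val (by omega)

private lemma no_cycle (hWF : R.WF) (hC : R.Correct) :
    ∀ n v e, NWalk R v e n → 0 < n → v 0 = v n → False := by
  intro n v e hw hn hvn
  classical
  have hP : ∃ d, ∃ i j, i < j ∧ j ≤ n ∧ j - i = d ∧ v i = v j :=
    ⟨n, 0, n, hn, le_rfl, by omega, hvn⟩
  obtain ⟨i, j, hij, hjn, hdij, hvij⟩ := Nat.find_spec hP
  set d := Nat.find hP with hdd
  have hmin : ∀ p q, p < q → q ≤ n → v p = v q → d ≤ q - p := by
    intro p q h1 h2 h3
    exact Nat.find_min' hP ⟨p, q, h1, h2, rfl, h3⟩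
  have hdpos : 0 < d := by omega
  obtain ⟨k, hk⟩ : ∃ k, d = k + 1 := ⟨d - 1, by omega⟩
  -- the cycle
  set V : Fin (k + 1) → R.Node := fun m => v (i + m.val) with hV
  set E : Fin (k + 1) → R.Edge := fun m => e (i + m.val) with hE
  have hlt : ∀ m : Fin (k + 1), i + m.val < j := by
    intro m; have := m.isLt; omega
  have hVinj : Function.Injective V := by
    intro p q h
    by_contra hpq
    have hne : i + p.val ≠ i + q.val := by
      intro h'; exact hpq (Fin.ext (by omega))
    rcases Nat.lt_or_ge (i + p.val) (i + q.val) with hlt' | hge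
    · have := hmin _ _ hlt' (le_of_lt (lt_of_lt_of_le (hlt q) hjn)) h
      have := hlt q; have := hlt p; omega
    · have hlt'' : i + q.val < i + p.val := by omega
      have := hmin _ _ hlt'' (le_of_lt (lt_of_lt_of_le (hlt p) hjn)) h.symm
      have := hlt q; have := hlt p; omega
  have hstep : ∀ m : Fin (k + 1), R.PolStep (E m) (V m) (v (i + m.val + 1)) := by
    intro m
    exact hw (i + m.val) (by have := hlt m; omega)
  have hVsucc : ∀ m : Fin (k + 1), V (m + 1) = v (i + m.val + 1) := by
    intro m
    by_cases hml : m = Fin.last k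
    · subst hml
      have h1 : (Fin.last k + 1 : Fin (k + 1)).val = 0 := by
        rw [Fin.val_add_one]; simp
      simp only [hV, h1]
      have : i + (Fin.last k).val + 1 = j := by simp [Fin.last]; omega
      rw [this]
      simpa using hvij
    · have h1 : (m + 1 : Fin (k + 1)).val = m.val + 1 := by
        rw [Fin.val_add_one, if_neg hml]
      simp only [hV, h1, Nat.add_assoc]
  have hEinj : Function.Injective E := by
    intro p q h
    have hp := hstep p
    have hq := hstep q
    rw [h] at hp
    obtain ⟨h1, _⟩ := polStep_det hp hq
    exact hVinj h1
  refine hC none ⟨k, V, E, hVinj, hEinj, ?_, ?_, ?_⟩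
  · intro m
    rw [hVsucc m]
    exact polStep_connects (hstep m)
  · -- parr switching condition
    intro p hp q hq q' hq'
    simp only [Set.mem_setOf_eq] at hq hq'
    have key : ∀ m : Fin (k + 1), R.tgt (E m) = some p → V m = p := by
      intro m htm
      have hs := hstep m
      obtain ⟨_, _, _, hpol, hd⟩ := hs
      rcases hd with ⟨hpos, hsrc, htgt⟩ | ⟨hneg, htgt, hsrc⟩
      · -- positive premiss of a parr link: impossible
        exfalso
        have hpeq : v (i + m.val + 1) = p := by
          rw [htm] at htgt; exact (Option.some_inj.mp htgt).symm
        rw [hpeq] at hpol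
        obtain ⟨e0, f0, g, hef, hprems, _, _, hconcls, htypg⟩ := hWF.2.2.2.1 p hp
        have hg : g ∈ R.concls p := by rw [hconcls]; simp
        have hgpol := hpol g hg
        rw [htypg] at hgpol
        rcases hgpol with hgp | hgn
        · cases hgp
        · have hmem : E m ∈ R.prems p := by
            simp [Struct.prems, htm]
          rw [hprems] at hmem
          cases hgn with
          | parr hA hB =>
            simp only [Finset.mem_insert, Finset.mem_singleton] at hmem
            rcases hmem with rfl | rfl
            · exact pos_neg_false hpos hA
            · exact pos_neg_false hpos hB
      · rw [htm] at htgt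
        exact Option.some_inj.mp htgt.symm
    have h1 := key q hq
    have h2 := key q' hq'
    exact hVinj (h1.trans h2.symm)
  · -- sync switching condition
    intro l hl q hq q' hq'
    simp only [Set.mem_setOf_eq] at hq hq'
    have key : ∀ m : Fin (k + 1), R.OutEdgeOf l (E m) → V m = l := by
      intro m ⟨_, hout⟩
      have hs := hstep m
      obtain ⟨_, _, _, _, hd⟩ := hs
      rcases hd with ⟨hpos, hsrc, htgt⟩ | ⟨hneg, htgt, hsrc⟩
      · rcases hout with ⟨hsl, _⟩ | ⟨_, hneg'⟩
        · exact hsrc.symm.trans hsl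
        · exact absurd hpos (fun h => pos_neg_false h hneg')
      · rcases hout with ⟨_, hpos'⟩ | ⟨htl, _⟩
        · exact absurd hpos' (fun h => pos_neg_false h hneg)
        · rw [htl] at htgt; exact Option.some_inj.mp htgt.symm
    exact hVinj ((key q hq).trans (key q' hq').symm)

end LinksOrderAux

/-- **Links Strict Order** (Lemma 1 of "The Geometry of Synchronization").
For an SMLL net `R`, the set of its links equipped with the relation `≺`
(`a ≺ b` iff there is a polarized path from `a` to `b`, i.e. a path of
polarized edges connecting polarized nodes, going upwards on negative edges
and downwards on positive edges, and not entering any box) is a finite strict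
partial order: the set of links is finite and `≺` is transitive and
irreflexive. -/
theorem smll_links_strict_partial_order (R : Struct) (hWF : R.WF) (hC : R.Correct) :
    Finite R.Node ∧
    (∀ a b c : R.Node, R.prec a b → R.prec b c → R.prec a c) ∧
    (∀ a : R.Node, ¬ R.prec a a) := by
  refine ⟨Finite.of_fintype _, ?_, ?_⟩
  · intro a b c hab hbc
    obtain ⟨n1, v1, e1, hn1, hw1, h10, h1n⟩ := walk_of_prec hab
    obtain ⟨n2, v2, e2, hn2, hw2, h20, h2n⟩ := walk_of_prec hbc
    set v : ℕ → R.Node := fun m => if m ≤ n1 then v1 m else v2 (m - n1) with hv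
    set e : ℕ → R.Edge := fun m => if m < n1 then e1 m else e2 (m - n1) with he
    have hw : NWalk R v e (n1 + n2) := by
      intro m hm
      by_cases hmn : m < n1
      · have h1 : v m = v1 m := by simp only [hv]; rw [if_pos (by omega)]
        have h2 : v (m + 1) = v1 (m + 1) := by simp only [hv]; rw [if_pos (by omega)]
        have h3 : e m = e1 m := by simp [he, hmn]
        rw [h1, h2, h3]; exact hw1 m hmn
      · have h1 : v m = v2 (m - n1) := by
          by_cases hme : m = n1
          · subst hme
            simp only [hv, le_refl, if_pos, Nat.sub_self]
            rw [h1n, h20]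
          · simp only [hv]; rw [if_neg (by omega)]
        have h2 : v (m + 1) = v2 (m + 1 - n1) := by
          simp only [hv]; rw [if_neg (by omega)]
        have h3 : e m = e2 (m - n1) := by simp [he, hmn]
        rw [h1, h2, h3]
        have h4 : m + 1 - n1 = m - n1 + 1 := by omega
        rw [h4]
        exact hw2 (m - n1) (by omega)
    have hv0 : v 0 = a := by simp only [hv]; rw [if_pos (by omega)]; exact h10
    have hvn : v (n1 + n2) = c := by
      simp only [hv]
      by_cases h : n1 + n2 ≤ n1
      · rw [if_pos h]
        have : n2 = 0 := by omega
        omega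
      · rw [if_neg h]
        have : n1 + n2 - n1 = n2 := by omega
        rw [this]; exact h2n
    by_cases hac : a = c
    · exact absurd (no_cycle hWF hC (n1 + n2) v e hw (by omega)
        (by rw [hv0, hvn, hac])) (fun h => h)
    · have := prec_of_walk (n1 + n2) v e hw (by rw [hv0, hvn]; exact hac)
      rwa [hv0, hvn] at this
  · rintro a ⟨k, v, e, h0, hl, hinj, -, -⟩
    have h := hinj (h0.trans hl.symm)
    have : (0 : Fin (k + 2)).val = (Fin.last (k + 1)).val := by rw [h]
    simp [Fin.last] at this
end

section
/- Let R be an SMLL net. If R contains a ready cut — a cut link at depth 0 neither of whose premisses is a hereditary conclusion of a box — then R is not a normal form for the reduction relation →. -/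
section ReadyCutHelpers

open Classical

variable {R : Struct}

lemma mem_prems_iff {c : R.Node} {e : R.Edge} : e ∈ R.prems c ↔ R.tgt e = some c := by
  simp [Struct.prems]

lemma mem_concls_iff {n : R.Node} {e : R.Edge} : e ∈ R.concls n ↔ R.src e = n := by
  simp [Struct.concls]

lemma mem_concls_self (e : R.Edge) : e ∈ R.concls (R.src e) := mem_concls_iff.2 rfl

lemma pair_cases {e v u : R.Edge} (h : e ∈ ({v, u} : Finset R.Edge)) : e = v ∨ e = u := by
  simpa using h

lemma not_pos_neg {A : Formula} (hp : A.Positive) (hn : A.Negative) : False := by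
  cases hp <;> cases hn

lemma notHBC_box {g : R.Edge} (h : ¬ R.HereditaryBoxConcl g) :
    R.sort (R.src g) ≠ .bot ∧ R.box (R.src g) = none := by
  constructor
  · intro hb; exact h ⟨g, Or.inl hb, .refl⟩
  · by_contra hb; exact h ⟨g, Or.inr hb, .refl⟩

lemma notHBC_step {g g' : R.Edge} (h : ¬ R.HereditaryBoxConcl g)
    (hs : R.SyncStepE g' g) : ¬ R.HereditaryBoxConcl g' := by
  rintro ⟨h0, hb, hp⟩; exact h ⟨h0, hb, hp.tail hs⟩

lemma src_ne_cut (hWF : R.WF) (g : R.Edge) : R.sort (R.src g) ≠ .cut := by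
  intro h
  have := (hWF.2.1 _ h).1
  have hg := mem_concls_self (R := R) g
  rw [this] at hg
  exact absurd hg (Finset.notMem_empty _)

lemma typ_src_one (hWF : R.WF) {g : R.Edge} (h : R.sort (R.src g) = .one) :
    R.typ g = .one := by
  obtain ⟨-, e, hc, ht⟩ := hWF.2.2.2.2.1 _ h
  have hg := mem_concls_self (R := R) g
  rw [hc, Finset.mem_singleton] at hg
  rw [hg]; exact ht

lemma typ_src_bot (hWF : R.WF) {g : R.Edge} (h : R.sort (R.src g) = .bot) :
    R.typ g = .bot := by
  obtain ⟨-, e, hc, ht⟩ := hWF.2.2.2.2.2.1 _ h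
  have hg := mem_concls_self (R := R) g
  rw [hc, Finset.mem_singleton] at hg
  rw [hg]; exact ht

lemma typ_src_tens (hWF : R.WF) {g : R.Edge} (h : R.sort (R.src g) = .tens) :
    ∃ A B, R.typ g = .tens A B := by
  obtain ⟨e, f, g0, -, -, -, -, hc, ht⟩ := hWF.2.2.1 _ h
  have hg := mem_concls_self (R := R) g
  rw [hc, Finset.mem_singleton] at hg
  exact ⟨_, _, by rw [hg]; exact ht⟩

lemma typ_src_parr (hWF : R.WF) {g : R.Edge} (h : R.sort (R.src g) = .parr) :
    ∃ A B, R.typ g = .parr A B := by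
  obtain ⟨e, f, g0, -, -, -, -, hc, ht⟩ := hWF.2.2.2.1 _ h
  have hg := mem_concls_self (R := R) g
  rw [hc, Finset.mem_singleton] at hg
  exact ⟨_, _, by rw [hg]; exact ht⟩

/-- For a conclusion of a sync link, the unique matching premiss. -/
lemma sync_prem_of_concl (hWF : R.WF) {l : R.Node} {g : R.Edge}
    (hl : R.sort l = .sync) (hg : R.src g = l) :
    ∃ g', R.tgt g' = some l ∧ R.pIdx g' = R.cIdx g ∧ R.typ g' = R.typ g := by
  obtain ⟨hpol, h1, h2, h3⟩ := hWF.2.2.2.2.2.2.1 _ hl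
  have hgc : g ∈ R.concls l := mem_concls_iff.2 hg
  obtain ⟨e, ⟨he, hpi⟩, -⟩ := h2 g hgc
  exact ⟨e, mem_prems_iff.1 he, hpi, (h3 e he g hgc hpi.symm).symm⟩

lemma polarized_src_sync (hWF : R.WF) {g : R.Edge} (h : R.sort (R.src g) = .sync) :
    (R.typ g).Polarized := by
  obtain ⟨e, he, -, ht⟩ := sync_prem_of_concl hWF h rfl
  have hpol := (hWF.2.2.2.2.2.2.1 _ h).1 e (mem_prems_iff.2 he)
  rwa [ht] at hpol

lemma box_sort_bot (hWF : R.WF) {n b : R.Node} (h : R.box n = some b) :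
    R.sort b = .bot := by
  obtain ⟨-, hins⟩ := hWF.2.2.2.2.2.2.2.2.2.1 n b h
  exact hWF.2.2.2.2.2.2.2.1 n b (by rw [hins]; exact Finset.mem_insert_self _ _)

lemma fresh_idx (R : Struct) :
    ∃ j : ℕ, ∀ e : R.Edge,
      R.pIdx e ≠ j ∧ R.cIdx e ≠ j ∧ R.pIdx e ≠ j + 1 ∧ R.cIdx e ≠ j + 1 := by
  classical
  set N := Finset.univ.sup (fun e : R.Edge => max (R.pIdx e) (R.cIdx e)) with hN
  refine ⟨N + 1, fun e => ?_⟩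
  have hle : max (R.pIdx e) (R.cIdx e) ≤ N :=
    Finset.le_sup (f := fun e : R.Edge => max (R.pIdx e) (R.cIdx e)) (Finset.mem_univ e)
  have h1 : R.pIdx e ≤ N := le_trans (le_max_left _ _) hle
  have h2 : R.cIdx e ≤ N := le_trans (le_max_right _ _) hle
  omega

lemma connectsAt_of {e : R.Edge} {u v : R.Node} (hs : R.src e = u) (ht : R.tgt e = some v)
    (hbu : R.box u = none) (hbv : R.box v = none) : R.ConnectsAt none e u v :=
  ⟨v, ht, Or.inl hbv, Or.inl ⟨Or.inl ⟨by rw [hs]; exact hbu, hs.symm⟩, Or.inl ⟨hbv, rfl⟩⟩⟩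

lemma connectsAt_comm {ℓ : Option R.Node} {e : R.Edge} {u v : R.Node}
    (h : R.ConnectsAt ℓ e u v) : R.ConnectsAt ℓ e v u := by
  obtain ⟨t, h1, h2, h3⟩ := h
  exact ⟨t, h1, h2, h3.symm⟩

lemma no_two_cycle (hC : R.Correct) {l m : R.Node} {e₁ e₂ : R.Edge}
    (hlm : l ≠ m) (h12 : e₁ ≠ e₂)
    (c₁ : R.ConnectsAt none e₁ l m) (c₂ : R.ConnectsAt none e₂ l m)
    (hp : ∀ p, R.sort p = .parr → ¬(R.tgt e₁ = some p ∧ R.tgt e₂ = some p))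
    (hs : ∀ s, R.sort s = .sync → ¬(R.OutEdgeOf s e₁ ∧ R.OutEdgeOf s e₂)) : False := by
  apply hC none
  refine ⟨1, ![l, m], ![e₁, e₂], ?_, ?_, ?_, ?_, ?_⟩
  · intro i j h
    fin_cases i <;> fin_cases j <;> simp_all
  · intro i j h
    fin_cases i <;> fin_cases j <;> simp_all
  · intro i
    fin_cases i
    · simpa using c₁
    · simpa using connectsAt_comm c₂
  · intro p hpp x hx y hy
    simp only [Set.mem_setOf_eq] at hx hy
    fin_cases x <;> fin_cases y <;> simp_all
  · intro s hss x hx y hy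
    simp only [Set.mem_setOf_eq] at hx hy
    fin_cases x <;> fin_cases y <;> simp_all

end ReadyCutHelpers

section Constructions

open Classical

/-- Lift an option along a subtype, given that any value satisfies the predicate. -/
def olift {α : Type*} {P : α → Prop} (o : Option α) (h : ∀ x, o = some x → P x) :
    Option {a // P a} :=
  match o, h with
  | none, _ => none
  | some a, h => some ⟨a, h a rfl⟩

lemma olift_bind {α : Type*} {P : α → Prop} (o : Option α) (h : ∀ x, o = some x → P x) :
    (olift o h).bind (fun x => some x.1) = o := by cases o <;> rfl

lemma olift_map_bind {α : Type*} {P : α → Prop} (o : Option α) (h : ∀ x, o = some x → P x) :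
    ((olift o h).map Option.some).bind
      (fun nn : Option {a // P a} => nn.map Subtype.val) = o := by cases o <;> rfl

variable {R : Struct}

lemma mk_axcut {a c : R.Node} {v u q : R.Edge}
    (sa : R.sort a = .ax) (sc : R.sort c = .cut)
    (ba : R.box a = none) (bc : R.box c = none)
    (vu : v ≠ u) (vq : v ≠ q) (uq : u ≠ q)
    (ca : R.concls a = {v, u}) (pc : R.prems c = {v, q})
    (hta : ∀ x, R.tgt x ≠ some a) (hsc : ∀ x, R.src x ≠ c)
    (hbne : ∀ n b, R.box n = some b → b ≠ a ∧ b ≠ c) :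
    ∃ Q, AxCutStep R Q := by
  classical
  have hsrc_ne : ∀ x : R.Edge, x ≠ v → x ≠ u → R.src x ≠ a := by
    intro x h1 h2 hx
    have : x ∈ R.concls a := mem_concls_iff.2 hx
    rw [ca] at this
    rcases pair_cases this with h | h <;> [exact h1 h; exact h2 h]
  have hmem_c : ∀ x : R.Edge, R.tgt x = some c → x = v ∨ x = q := by
    intro x hx
    have : x ∈ R.prems c := mem_prems_iff.2 hx
    rw [pc] at this
    exact pair_cases this
  have key_u : ∀ y, R.tgt u = some y → y ≠ a ∧ y ≠ c := by
    intro y hy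
    refine ⟨fun h => hta u (h ▸ hy), fun h => ?_⟩
    rcases hmem_c u (h ▸ hy) with h' | h' <;> [exact vu h'.symm; exact uq h']
  have key_x : ∀ x : R.Edge, x ≠ v → x ≠ q → ∀ y, R.tgt x = some y → y ≠ a ∧ y ≠ c := by
    intro x h1 h2 y hy
    refine ⟨fun h => hta x (h ▸ hy), fun h => ?_⟩
    rcases hmem_c x (h ▸ hy) with h' | h' <;> [exact h1 h'; exact h2 h']
  refine ⟨{
      Edge := {x : R.Edge // x ≠ v ∧ x ≠ u}
      Node := {n : R.Node // n ≠ a ∧ n ≠ c}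
      edgeFintype := inferInstance
      nodeFintype := inferInstance
      edgeDecEq := inferInstance
      nodeDecEq := inferInstance
      typ := fun x => R.typ x.1
      sort := fun n => R.sort n.1
      src := fun x => ⟨R.src x.1, hsrc_ne x.1 x.2.1 x.2.2, hsc x.1⟩
      tgt := fun x =>
        if hx : x.1 = q then olift (R.tgt u) key_u
        else olift (R.tgt x.1) (key_x x.1 x.2.1 hx)
      pIdx := fun x => if x.1 = q then R.pIdx u else R.pIdx x.1
      cIdx := fun x => R.cIdx x.1
      box := fun n => olift (R.box n.1) (fun b hb => hbne n.1 b hb)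
      boxes := fun n => Finset.univ.filter (fun b => b.1 ∈ R.boxes n.1) }, ?_⟩
  refine ⟨a, c, v, u, q, sa, sc, ba, bc, vu, vq, uq, ca, pc,
    fun n => some n.1, fun x => some x.1, ?_, ?_, ?_, ?_, ⟨?_, ?_⟩, ?_⟩
  · intro n h; exact Option.some_ne_none _ h
  · intro x h; exact Option.some_ne_none _ h
  · refine ⟨?_, ?_, ?_⟩
    · intro n n' b h h'
      apply Subtype.ext
      rw [Option.some_inj] at h h'
      rw [h, h']
    · intro n b h
      rw [Option.some_inj] at h
      exact h ▸ ⟨n.2.1, n.2.2⟩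
    · intro b hb
      exact ⟨⟨b, hb.1, hb.2⟩, rfl⟩
  · refine ⟨?_, ?_, ?_⟩
    · intro n n' b h h'
      apply Subtype.ext
      rw [Option.some_inj] at h h'
      rw [h, h']
    · intro n b h
      rw [Option.some_inj] at h
      exact h ▸ ⟨n.2.1, n.2.2⟩
    · intro b hb
      exact ⟨⟨b, hb.1, hb.2⟩, rfl⟩
  · intro x y hxy hy
    rw [Option.some_inj] at hxy
    subst hxy
    have hq : x.1 ≠ q := by simpa using hy
    refine ⟨rfl, rfl, ?_, ?_, rfl⟩
    · show ((if hx : x.1 = q then olift (R.tgt u) key_u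
          else olift (R.tgt x.1) (key_x x.1 x.2.1 hx)).bind fun z => some z.1) = R.tgt x.1
      rw [dif_neg hq]
      exact olift_bind _ _
    · show (if x.1 = q then R.pIdx u else R.pIdx x.1) = R.pIdx x.1
      rw [if_neg hq]
  · intro n m h _
    rw [Option.some_inj] at h
    subst h
    refine ⟨rfl, olift_bind _ _, ?_⟩
    intro b b' hb
    rw [Option.some_inj] at hb
    subst hb
    simp [Finset.mem_filter]
  · intro x hx
    rw [Option.some_inj] at hx
    refine ⟨?_, ?_, ?_, ?_, ?_⟩
    · show R.typ x.1 = R.typ q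
      rw [hx]
    · show some (R.src x.1) = some (R.src q)
      rw [hx]
    · show ((if hx : x.1 = q then olift (R.tgt u) key_u
          else olift (R.tgt x.1) (key_x x.1 x.2.1 hx)).bind fun z => some z.1) = R.tgt u
      rw [dif_pos hx]
      exact olift_bind _ _
    · show (if x.1 = q then R.pIdx u else R.pIdx x.1) = R.pIdx u
      rw [if_pos hx]
    · show R.cIdx x.1 = R.cIdx q
      rw [hx]

end Constructions

section Constructions2

open Classical

lemma obind_id {α : Type*} (o : Option α) : (o.bind fun a => some a) = o := by
  cases o <;> rfl

variable {R : Struct}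

lemma mk_synccut {l c : R.Node} {d d' q : R.Edge} {j : ℕ}
    (sl : R.sort l = .sync) (sc : R.sort c = .cut)
    (bl : R.box l = none) (bc : R.box c = none)
    (hneg : (R.typ d').Negative)
    (hsd' : R.src d' = l) (htd' : R.tgt d' = some c)
    (htd : R.tgt d = some l) (hpd : R.pIdx d = R.cIdx d')
    (hd'q : d' ≠ q) (hdq : d ≠ q) (hdd' : d ≠ d') (pc : R.prems c = {d', q})
    (hj1 : ∀ e, R.tgt e = some l → R.pIdx e ≠ j)
    (hj2 : ∀ e, R.src e = l → R.cIdx e ≠ j) :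
    ∃ Q, SyncCutStep R Q := by
  classical
  have hqd' : q ≠ d' := fun h => hd'q h.symm
  have hqd : q ≠ d := fun h => hdq h.symm
  refine ⟨{
      Edge := Option {e : R.Edge // e ≠ d'}
      Node := R.Node
      edgeFintype := inferInstance
      nodeFintype := inferInstance
      edgeDecEq := inferInstance
      nodeDecEq := inferInstance
      typ := fun x => match x with | none => R.typ q | some e => R.typ e.1
      sort := R.sort
      src := fun x => match x with | none => l | some e => R.src e.1
      tgt := fun x => match x with
        | none => some c
        | some e => if e.1 = d then some c else if e.1 = q then some l else R.tgt e.1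
      pIdx := fun x => match x with
        | none => R.pIdx q
        | some e => if e.1 = d then R.pIdx d' else if e.1 = q then j else R.pIdx e.1
      cIdx := fun x => match x with | none => j | some e => R.cIdx e.1
      box := R.box
      boxes := R.boxes }, ?_⟩
  refine ⟨l, c, d, d', q, j, sl, sc, bl, bc, hneg, hsd', htd', htd, hpd,
    hd'q, hdq, hdd', pc, hj1, hj2,
    fun n => some n, fun x => x.map (·.1), l, c, none,
    fun n h => Option.some_ne_none _ h, ?_, ?_, rfl, rfl, rfl, ?_,
    ⟨?_, ?_⟩, ?_, ?_, ?_⟩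
  · exact ⟨fun n n' b h h' => by rw [Option.some_inj] at h h'; rw [h, h'],
      fun n b h => Set.mem_univ _, fun b _ => ⟨b, rfl⟩⟩
  · refine ⟨?_, ?_, ?_⟩
    · rintro (_ | e) (_ | e') b h h' <;> simp_all
      exact Subtype.ext (h.trans h'.symm)
    · rintro (_ | e) b h <;> simp_all
      rw [← h]; exact e.2
    · intro b hb; exact ⟨some ⟨b, hb⟩, rfl⟩
  · rintro (_ | e) h <;> simp_all
  · rintro (_ | e) y h hy <;> simp only [Option.map_some, Option.map_none] at h
    · exact absurd h (by simp)
    · rw [Option.some_inj] at h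
      subst h
      have h1 : e.1 ≠ d := fun hh => hy (Or.inl hh)
      have h2 : e.1 ≠ q := fun hh => hy (Or.inr hh)
      refine ⟨rfl, rfl, ?_, ?_, rfl⟩
      · show ((if e.1 = d then some c else if e.1 = q then some l else R.tgt e.1).bind
            fun n => some n) = R.tgt e.1
        rw [if_neg h1, if_neg h2, obind_id]
      · show (if e.1 = d then R.pIdx d' else if e.1 = q then j else R.pIdx e.1) = R.pIdx e.1
        rw [if_neg h1, if_neg h2]
  · intro n m h _
    rw [Option.some_inj] at h
    subst h
    exact ⟨rfl, obind_id _, fun b b' hb => by rw [Option.some_inj] at hb; rw [hb]⟩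
  · rintro (_ | e) h <;> simp only [Option.map_some, Option.map_none] at h
    · exact absurd h (by simp)
    · rw [Option.some_inj] at h
      refine ⟨?_, ?_, ?_, ?_, ?_⟩
      · show R.typ e.1 = R.typ d
        rw [h]
      · show some (R.src e.1) = some (R.src d)
        rw [h]
      · show R.cIdx e.1 = R.cIdx d
        rw [h]
      · show (if e.1 = d then some c else if e.1 = q then some l else R.tgt e.1) = some c
        rw [if_pos h]
      · show (if e.1 = d then R.pIdx d' else if e.1 = q then j else R.pIdx e.1) = R.pIdx d'
        rw [if_pos h]
  · rintro (_ | e) h <;> simp only [Option.map_some, Option.map_none] at h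
    · exact absurd h (by simp)
    · rw [Option.some_inj] at h
      have h1 : e.1 ≠ d := by rw [h]; exact hqd
      refine ⟨?_, ?_, ?_, ?_, ?_⟩
      · show R.typ e.1 = R.typ q
        rw [h]
      · show some (R.src e.1) = some (R.src q)
        rw [h]
      · show R.cIdx e.1 = R.cIdx q
        rw [h]
      · show (if e.1 = d then some c else if e.1 = q then some l else R.tgt e.1) = some l
        rw [if_neg h1, if_pos h]
      · show (if e.1 = d then R.pIdx d' else if e.1 = q then j else R.pIdx e.1) = j
        rw [if_neg h1, if_pos h]
  · exact ⟨rfl, rfl, rfl, rfl, rfl⟩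

lemma mk_syncax {l a : R.Node} {u u' v : R.Edge} {j : ℕ}
    (sl : R.sort l = .sync) (sa : R.sort a = .ax)
    (bl : R.box l = none) (ba : R.box a = none)
    (hpos : (R.typ u).Positive) (huv : u ≠ v) (ca : R.concls a = {u, v})
    (htu : R.tgt u = some l) (hsu' : R.src u' = l) (hcu' : R.cIdx u' = R.pIdx u)
    (hu'u : u' ≠ u) (hu'v : u' ≠ v) (hsv : R.src v = a)
    (hj1 : ∀ e, R.tgt e = some l → R.pIdx e ≠ j)
    (hj2 : ∀ e, R.src e = l → R.cIdx e ≠ j) :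
    ∃ Q, SyncAxStep R Q := by
  classical
  have hvu' : v ≠ u' := fun h => hu'v h.symm
  refine ⟨{
      Edge := Option {e : R.Edge // e ≠ u}
      Node := R.Node
      edgeFintype := inferInstance
      nodeFintype := inferInstance
      edgeDecEq := inferInstance
      nodeDecEq := inferInstance
      typ := fun x => match x with | none => R.typ v | some e => R.typ e.1
      sort := R.sort
      src := fun x => match x with
        | none => l
        | some e => if e.1 = u' then a else R.src e.1
      tgt := fun x => match x with
        | none => R.tgt v
        | some e => if e.1 = v then some l else R.tgt e.1
      pIdx := fun x => match x with
        | none => R.pIdx v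
        | some e => if e.1 = v then j else R.pIdx e.1
      cIdx := fun x => match x with
        | none => j
        | some e => if e.1 = u' then R.cIdx u else R.cIdx e.1
      box := R.box
      boxes := R.boxes }, ?_⟩
  refine ⟨l, a, u, u', v, j, sl, sa, bl, ba, hpos, huv, ca, htu, hsu', hcu',
    hu'u, hu'v, hj1, hj2,
    fun n => some n, fun x => x.map (·.1), l, a, none,
    fun n h => Option.some_ne_none _ h, ?_, ?_, rfl, rfl, rfl, ?_,
    ⟨?_, ?_⟩, ?_, ?_, ?_⟩
  · exact ⟨fun n n' b h h' => by rw [Option.some_inj] at h h'; rw [h, h'],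
      fun n b h => Set.mem_univ _, fun b _ => ⟨b, rfl⟩⟩
  · refine ⟨?_, ?_, ?_⟩
    · rintro (_ | e) (_ | e') b h h' <;> simp_all
      exact Subtype.ext (h.trans h'.symm)
    · rintro (_ | e) b h <;> simp_all
      rw [← h]; exact e.2
    · intro b hb; exact ⟨some ⟨b, hb⟩, rfl⟩
  · rintro (_ | e) h <;> simp_all
  · rintro (_ | e) y h hy <;> simp only [Option.map_some, Option.map_none] at h
    · exact absurd h (by simp)
    · rw [Option.some_inj] at h
      subst h
      have h1 : e.1 ≠ u' := fun hh => hy (Or.inl hh)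
      have h2 : e.1 ≠ v := fun hh => hy (Or.inr hh)
      refine ⟨rfl, ?_, ?_, ?_, ?_⟩
      · show some (if e.1 = u' then a else R.src e.1) = some (R.src e.1)
        rw [if_neg h1]
      · show ((if e.1 = v then some l else R.tgt e.1).bind fun n => some n) = R.tgt e.1
        rw [if_neg h2, obind_id]
      · show (if e.1 = v then j else R.pIdx e.1) = R.pIdx e.1
        rw [if_neg h2]
      · show (if e.1 = u' then R.cIdx u else R.cIdx e.1) = R.cIdx e.1
        rw [if_neg h1]
  · intro n m h _
    rw [Option.some_inj] at h
    subst h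
    exact ⟨rfl, obind_id _, fun b b' hb => by rw [Option.some_inj] at hb; rw [hb]⟩
  · rintro (_ | e) h <;> simp only [Option.map_some, Option.map_none] at h
    · exact absurd h (by simp)
    · rw [Option.some_inj] at h
      have h2 : e.1 ≠ v := by rw [h]; exact hu'v
      refine ⟨?_, ?_, ?_, ?_, ?_⟩
      · show R.typ e.1 = R.typ u'
        rw [h]
      · show (if e.1 = u' then a else R.src e.1) = a
        rw [if_pos h]
      · show (if e.1 = u' then R.cIdx u else R.cIdx e.1) = R.cIdx u
        rw [if_pos h]
      · show ((if e.1 = v then some l else R.tgt e.1).bind fun n => some n) = R.tgt u'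
        rw [if_neg h2, obind_id, h]
      · show (if e.1 = v then j else R.pIdx e.1) = R.pIdx u'
        rw [if_neg h2, h]
  · rintro (_ | e) h <;> simp only [Option.map_some, Option.map_none] at h
    · exact absurd h (by simp)
    · rw [Option.some_inj] at h
      have h1 : e.1 ≠ u' := by rw [h]; exact hvu'
      refine ⟨?_, ?_, ?_, ?_, ?_⟩
      · show R.typ e.1 = R.typ v
        rw [h]
      · show (if e.1 = u' then a else R.src e.1) = a
        rw [if_neg h1, h, hsv]
      · show (if e.1 = u' then R.cIdx u else R.cIdx e.1) = R.cIdx v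
        rw [if_neg h1, h]
      · show (if e.1 = v then some l else R.tgt e.1) = some l
        rw [if_pos h]
      · show (if e.1 = v then j else R.pIdx e.1) = j
        rw [if_pos h]
  · exact ⟨rfl, rfl, rfl, obind_id _, rfl⟩

end Constructions2

section Constructions3

open Classical

variable {R : Struct}

lemma mk_syncmult {l m : R.Node} {z w x y : R.Edge} {i₁ i₂ : ℕ}
    (sl : R.sort l = .sync) (sm : R.sort m = .tens ∨ R.sort m = .parr)
    (bl : R.box l = none) (bm : R.box m = none)
    (hsz : R.src z = m) (htz : R.tgt z = some l)
    (hsw : R.src w = l) (hcw : R.cIdx w = R.pIdx z)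
    (hxy : x ≠ y) (pm : R.prems m = {x, y})
    (hpx : R.pIdx x = 0) (hpy : R.pIdx y = 1)
    (hi : i₁ ≠ i₂)
    (hj1 : ∀ e, R.tgt e = some l → R.pIdx e ≠ i₁ ∧ R.pIdx e ≠ i₂)
    (hj2 : ∀ e, R.src e = l → R.cIdx e ≠ i₁ ∧ R.cIdx e ≠ i₂)
    (hxz : x ≠ z) (hyz : y ≠ z) (hwz : w ≠ z) (hwx : w ≠ x) (hwy : w ≠ y) :
    ∃ Q, SyncMultStep R Q := by
  classical
  have hxw : x ≠ w := fun h => hwx h.symm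
  have hyw : y ≠ w := fun h => hwy h.symm
  have hyx : y ≠ x := fun h => hxy h.symm
  refine ⟨{
      Edge := {e : R.Edge // e ≠ z} ⊕ Bool
      Node := R.Node
      edgeFintype := inferInstance
      nodeFintype := inferInstance
      edgeDecEq := inferInstance
      nodeDecEq := inferInstance
      typ := fun q => match q with
        | .inl e => R.typ e.1
        | .inr b => if b then R.typ y else R.typ x
      sort := R.sort
      src := fun q => match q with
        | .inl e => if e.1 = w then m else R.src e.1
        | .inr _ => l
      tgt := fun q => match q with
        | .inl e => if e.1 = x ∨ e.1 = y then some l else R.tgt e.1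
        | .inr _ => some m
      pIdx := fun q => match q with
        | .inl e => if e.1 = x then i₁ else if e.1 = y then i₂ else R.pIdx e.1
        | .inr b => if b then 1 else 0
      cIdx := fun q => match q with
        | .inl e => R.cIdx e.1
        | .inr b => if b then i₂ else i₁
      box := R.box
      boxes := R.boxes }, ?_⟩
  refine ⟨l, m, z, w, x, y, i₁, i₂, sl, sm, bl, bm, hsz, htz, hsw, hcw,
    hxy, pm, hpx, hpy, hi, hj1, hj2,
    fun n => some n, fun q => match q with | .inl e => some e.1 | .inr _ => none,
    l, m, .inr false, .inr true,
    fun n h => Option.some_ne_none _ h, ?_, ?_, rfl, rfl,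
    by simp, rfl, rfl, ?_, ⟨?_, ?_⟩, ?_, ?_, ?_, ?_, ?_⟩
  · exact ⟨fun n n' b h h' => by rw [Option.some_inj] at h h'; rw [h, h'],
      fun n b h => Set.mem_univ _, fun b _ => ⟨b, rfl⟩⟩
  · refine ⟨?_, ?_, ?_⟩
    · rintro (e | b) (e' | b') bb h h' <;> simp_all
      exact Subtype.ext (h.trans h'.symm)
    · rintro (e | b) bb h <;> simp_all
      rw [← h]; exact e.2
    · intro b hb; exact ⟨.inl ⟨b, hb⟩, rfl⟩
  · rintro (e | b) h <;> simp_all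
  · rintro (e | b) yy h hy <;> simp_all
  · intro n mm h _
    rw [Option.some_inj] at h
    subst h
    exact ⟨rfl, obind_id _, fun b b' hb => by rw [Option.some_inj] at hb; rw [hb]⟩
  · rintro (e | b) h <;> simp_all
  · rintro (e | b) h <;> simp_all
  · rintro (e | b) h <;> simp_all
  · exact ⟨rfl, rfl, rfl, rfl, rfl⟩
  · exact ⟨rfl, rfl, rfl, rfl, rfl⟩

lemma mk_tensparr {c t p : R.Node} {s s' a1 a2 b1 b2 : R.Edge}
    (sc : R.sort c = .cut) (st : R.sort t = .tens) (sp : R.sort p = .parr)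
    (bc : R.box c = none) (bt : R.box t = none) (bp : R.box p = none)
    (hss' : s ≠ s') (pc : R.prems c = {s, s'})
    (ct : R.concls t = {s}) (cp : R.concls p = {s'})
    (ha : a1 ≠ a2) (pt : R.prems t = {a1, a2})
    (hpa1 : R.pIdx a1 = 0) (hpa2 : R.pIdx a2 = 1)
    (hb : b1 ≠ b2) (pp : R.prems p = {b1, b2})
    (hpb1 : R.pIdx b1 = 0) (hpb2 : R.pIdx b2 = 1)
    (htp : t ≠ p) (hct : c ≠ t) (hcp : c ≠ p)
    (hbne : ∀ n b, R.box n = some b → b ≠ t ∧ b ≠ p) :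
    ∃ Q, TensParrStep R Q := by
  classical
  have hta1 : R.tgt a1 = some t := mem_prems_iff.1 (by rw [pt]; simp)
  have hta2 : R.tgt a2 = some t := mem_prems_iff.1 (by rw [pt]; simp)
  have htb1 : R.tgt b1 = some p := mem_prems_iff.1 (by rw [pp]; simp)
  have htb2 : R.tgt b2 = some p := mem_prems_iff.1 (by rw [pp]; simp)
  have ha2a1 : a2 ≠ a1 := fun h => ha h.symm
  have hb2b1 : b2 ≠ b1 := fun h => hb h.symm
  have ha2b1 : a2 ≠ b1 := fun h => htp (by rw [← Option.some_inj, ← hta2, h, htb1])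
  have hb2a1 : b2 ≠ a1 := by
    intro h
    rw [← h, htb2] at hta1
    exact htp (Option.some_inj.mp hta1).symm
  have hsrc_ne : ∀ e : R.Edge, e ≠ s → e ≠ s' → R.src e ≠ t ∧ R.src e ≠ p := by
    intro e h1 h2
    constructor
    · intro hh
      have : e ∈ R.concls t := mem_concls_iff.2 hh
      rw [ct, Finset.mem_singleton] at this
      exact h1 this
    · intro hh
      have : e ∈ R.concls p := mem_concls_iff.2 hh
      rw [cp, Finset.mem_singleton] at this
      exact h2 this
  have key : ∀ e : R.Edge, ¬(e = a1 ∨ e = b1) → ¬(e = a2 ∨ e = b2) →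
      ∀ nn, R.tgt e = some nn → nn ≠ t ∧ nn ≠ p := by
    intro e h1 h2 nn hnn
    constructor
    · intro hh
      subst hh
      have : e ∈ R.prems nn := mem_prems_iff.2 hnn
      rw [pt] at this
      rcases pair_cases this with h | h
      · exact h1 (Or.inl h)
      · exact h2 (Or.inl h)
    · intro hh
      subst hh
      have : e ∈ R.prems nn := mem_prems_iff.2 hnn
      rw [pp] at this
      rcases pair_cases this with h | h
      · exact h1 (Or.inr h)
      · exact h2 (Or.inr h)
  refine ⟨{
      Edge := {e : R.Edge // e ≠ s ∧ e ≠ s'}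
      Node := Option {n : R.Node // n ≠ t ∧ n ≠ p}
      edgeFintype := inferInstance
      nodeFintype := inferInstance
      edgeDecEq := inferInstance
      nodeDecEq := inferInstance
      typ := fun e => R.typ e.1
      sort := fun nn => match nn with
        | none => .cut
        | some n => R.sort n.1
      src := fun e => some ⟨R.src e.1, hsrc_ne e.1 e.2.1 e.2.2⟩
      tgt := fun e =>
        if e.1 = a1 ∨ e.1 = b1 then some (some ⟨c, hct, hcp⟩)
        else if h2 : e.1 = a2 ∨ e.1 = b2 then some none
        else if h1 : e.1 = a1 ∨ e.1 = b1 then some (some ⟨c, hct, hcp⟩)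
        else (olift (R.tgt e.1) (key e.1 h1 h2)).map Option.some
      pIdx := fun e => R.pIdx e.1
      cIdx := fun e => R.cIdx e.1
      box := fun nn => match nn with
        | none => none
        | some n => (olift (R.box n.1) (fun b hb => hbne n.1 b hb)).map Option.some
      boxes := fun nn => match nn with
        | none => ∅
        | some n => Finset.univ.filter
            (fun b => match b with
              | none => False
              | some bb => bb.1 ∈ R.boxes n.1) }, ?_⟩
  have mainOr : True := trivial
  refine ⟨c, t, p, s, s', a1, a2, b1, b2, sc, st, sp, bc, bt, bp, hss', pc, ct, cp,
    ha, pt, hpa1, hpa2, hb, pp, hpb1, hpb2,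
    fun nn => nn.map (·.1), fun e => some e.1, none,
    fun e h => Option.some_ne_none _ h, ?_, ?_, rfl, ?_, rfl, rfl, rfl,
    ⟨?_, ?_⟩, ?_, ?_⟩
  · refine ⟨?_, ?_, ?_⟩
    · rintro (_ | n) (_ | n') b h h' <;> simp_all
      exact Subtype.ext (h.trans h'.symm)
    · rintro (_ | n) b h <;> simp_all
      rw [← h]; exact n.2
    · intro b hb; exact ⟨some ⟨b, hb.1, hb.2⟩, rfl⟩
  · refine ⟨?_, ?_, ?_⟩
    · intro e e' b h h'
      rw [Option.some_inj] at h h'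
      exact Subtype.ext (h.trans h'.symm)
    · intro e b h
      rw [Option.some_inj] at h
      rw [← h]; exact ⟨e.2.1, e.2.2⟩
    · intro b hb; exact ⟨⟨b, hb.1, hb.2⟩, rfl⟩
  · rintro (_ | n) h <;> simp_all
  · intro e yy h hy
    rw [Option.some_inj] at h
    subst h
    simp only [Set.mem_insert_iff, Set.mem_singleton_iff, not_or] at hy
    obtain ⟨n1, n2, n3, n4⟩ := hy
    refine ⟨rfl, rfl, ?_, rfl, rfl⟩
    show ((if e.1 = a1 ∨ e.1 = b1 then some (some ⟨c, hct, hcp⟩)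
        else if h2 : e.1 = a2 ∨ e.1 = b2 then some none
        else if h1 : e.1 = a1 ∨ e.1 = b1 then some (some ⟨c, hct, hcp⟩)
        else (olift (R.tgt e.1) (key e.1 h1 h2)).map Option.some).bind
          fun nn => nn.map (·.1)) = R.tgt e.1
    rw [if_neg (by tauto), dif_neg (by tauto), dif_neg (by tauto)]
    exact olift_map_bind _ _
  · rintro (_ | n) mm h _
    · simp at h
    · simp only [Option.map_some, Option.some_inj] at h
      subst h
      refine ⟨rfl, olift_map_bind _ _, ?_⟩
      rintro (_ | b) b' hb
      · simp at hb
      · simp only [Option.map_some, Option.some_inj] at hb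
        subst hb
        show (some b ∈ Finset.univ.filter
            (fun bb : Option {n : R.Node // n ≠ t ∧ n ≠ p} => match bb with
              | none => False
              | some bbb => bbb.1 ∈ R.boxes n.1)) ↔ b.1 ∈ R.boxes n.1
        simp
  · intro xx yy h hor
    rw [Option.some_inj] at h
    subst h
    have hmain : xx.1 = a1 ∨ xx.1 = b1 := hor
    refine ⟨rfl, rfl, ?_, rfl⟩
    show ((if xx.1 = a1 ∨ xx.1 = b1 then some (some ⟨c, hct, hcp⟩)
        else if h2 : xx.1 = a2 ∨ xx.1 = b2 then some none
        else if h1 : xx.1 = a1 ∨ xx.1 = b1 then some (some ⟨c, hct, hcp⟩)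
        else (olift (R.tgt xx.1) (key xx.1 h1 h2)).map Option.some).bind
          fun nn => nn.map (·.1)) = some c
    rw [if_pos hmain]
    rfl
  · intro xx yy h hor
    rw [Option.some_inj] at h
    subst h
    have hn1 : ¬(xx.1 = a1 ∨ xx.1 = b1) := by
      rcases hor with h | h <;> rw [h] <;> tauto
    refine ⟨rfl, rfl, ?_, rfl⟩
    show (if xx.1 = a1 ∨ xx.1 = b1 then some (some ⟨c, hct, hcp⟩)
        else if h2 : xx.1 = a2 ∨ xx.1 = b2 then some none
        else if h1 : xx.1 = a1 ∨ xx.1 = b1 then some (some ⟨c, hct, hcp⟩)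
        else (olift (R.tgt xx.1) (key xx.1 h1 h2)).map Option.some) = some none
    rw [if_neg hn1, dif_pos hor]

end Constructions3

section Acyclic

open Classical

/-- One upward step along a sync link, on positive edges at depth 0. -/
def StepUp (R : Struct) (g g' : R.Edge) : Prop :=
  (R.typ g).Positive ∧ (R.typ g').Positive ∧
  R.sort (R.src g) = .sync ∧ R.box (R.src g) = none ∧ R.box (R.src g') = none ∧
  R.tgt g' = some (R.src g) ∧ R.pIdx g' = R.cIdx g

lemma stepUp_acyclic (R : Struct) (hC : R.Correct) (g : R.Edge) :
    ¬ Relation.TransGen (StepUp R) g g := by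
  classical
  intro hcyc
  have key : ∀ x : R.Edge, Relation.TransGen (StepUp R) x x →
      ∃ y, StepUp R x y ∧ Relation.TransGen (StepUp R) y y := by
    intro x hx
    obtain ⟨y, hxy, hyx⟩ := Relation.TransGen.head'_iff.mp hx
    exact ⟨y, hxy, Relation.TransGen.tail' hyx hxy⟩
  let T := {x : R.Edge // Relation.TransGen (StepUp R) x x}
  let next : T → T := fun pp => ⟨(key pp.1 pp.2).choose, ((key pp.1 pp.2).choose_spec.2)⟩
  let U : ℕ → T := fun n => next^[n] ⟨g, hcyc⟩
  have hstep : ∀ t, StepUp R (U t).1 (U (t + 1)).1 := by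
    intro t
    have h1 : U (t + 1) = next (U t) := Function.iterate_succ_apply' next t _
    rw [h1]
    exact (key (U t).1 (U t).2).choose_spec.1
  set s : ℕ → R.Node := fun t => R.src (U t).1 with hs
  have hrep : ∃ jj, 0 < jj ∧ ∃ ii, ii < jj ∧ s ii = s jj := by
    obtain ⟨x, y, hxy, hfe⟩ := Fintype.exists_ne_map_eq_of_card_lt
      (fun t : Fin (Fintype.card R.Node + 1) => s t.val) (by simp)
    rcases Nat.lt_or_ge x.val y.val with h | h
    · exact ⟨y.val, by omega, x.val, h, hfe⟩
    · have h' : y.val < x.val := by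
        rcases Nat.lt_or_ge y.val x.val with h2 | h2
        · exact h2
        · exact absurd (Fin.ext (by omega)) hxy
      exact ⟨x.val, by omega, y.val, h', hfe.symm⟩
  have hJspec := Nat.find_spec hrep
  set J := Nat.find hrep with hJdef
  obtain ⟨hJpos, i, hiJ, hsiJ⟩ := hJspec
  have hmin : ∀ α β, α < β → β < J → s α ≠ s β := by
    intro α β hab hbJ heq
    exact Nat.find_min hrep hbJ ⟨by omega, α, hab, heq⟩
  have hsJ : s J = s i := hsiJ.symm
  set k := J - i - 1 with hk
  have hik : i + k + 1 = J := by omega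
  have main2 : ∀ a b : ℕ, a < b → b ≤ k → s (i + a + 1) = s (i + b + 1) → False := by
    intro a b hab hb heq2
    rcases Nat.lt_or_ge (i + b + 1) J with h2 | h2
    · exact hmin (i + a + 1) (i + b + 1) (by omega) h2 heq2
    · have hbJ : i + b + 1 = J := by omega
      rw [hbJ, hsJ] at heq2
      exact hmin i (i + a + 1) (by omega) (by omega) heq2.symm
  have hinj1 : ∀ α β : Fin (k + 1), s (i + α.val + 1) = s (i + β.val + 1) → α = β := by
    intro α β heq
    have hα := α.isLt
    have hβ := β.isLt
    by_contra hne
    have hvne : α.val ≠ β.val := fun h => hne (Fin.ext h)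
    rcases Nat.lt_or_ge α.val β.val with h | h
    · exact main2 _ _ h (by omega) heq
    · exact main2 β.val α.val (by omega) (by omega) heq.symm
  have hwrap : ∀ α : Fin (k + 1), s (i + ((α + 1 : Fin (k + 1))).val) = s (i + α.val + 1) := by
    intro α
    rcases eq_or_ne α (Fin.last k) with hL | hL
    · have h1 : ((α + 1 : Fin (k + 1))).val = 0 := by
        rw [Fin.val_add_one, if_pos hL]
      have h2 : α.val = k := by rw [hL, Fin.val_last]
      rw [h1, h2, Nat.add_zero, hik, hsJ]
    · have h1 : ((α + 1 : Fin (k + 1))).val = α.val + 1 := by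
        rw [Fin.val_add_one, if_neg hL]
      rw [h1, ← Nat.add_assoc]
  refine hC none ⟨k, fun α => s (i + α.val), fun α => (U (i + α.val + 1)).1, ?_, ?_, ?_, ?_, ?_⟩
  · intro α β heq
    have hα := α.isLt
    have hβ := β.isLt
    by_contra hne
    have hvne : α.val ≠ β.val := fun h => hne (Fin.ext h)
    rcases Nat.lt_or_ge α.val β.val with h | h
    · exact hmin (i + α.val) (i + β.val) (by omega) (by omega) heq
    · have : β.val < α.val := by omega
      exact hmin (i + β.val) (i + α.val) (by omega) (by omega) heq.symm
  · intro α β heq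
    exact hinj1 α β (congrArg R.src heq)
  · intro α
    obtain ⟨hpos, hpos', hsync, hbox, hbox', htgt, hpidx⟩ := hstep (i + α.val)
    show R.ConnectsAt none ((U (i + α.val + 1)).1) (s (i + α.val))
      (s (i + ((α + 1 : Fin (k + 1))).val))
    rw [hwrap α]
    exact connectsAt_comm (connectsAt_of rfl htgt hbox' hbox)
  · intro pp hpp x hx y hy
    exfalso
    simp only [Set.mem_setOf_eq] at hx
    obtain ⟨-, -, hsync, -, -, htgt, -⟩ := hstep (i + x.val)
    rw [htgt, Option.some_inj] at hx
    rw [← hx] at hpp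
    rw [hsync] at hpp
    exact LinkSort.noConfusion hpp
  · intro l0 hl0 x hx y hy
    simp only [Set.mem_setOf_eq] at hx hy
    have f : ∀ β : Fin (k + 1), R.OutEdgeOf l0 ((U (i + β.val + 1)).1) →
        s (i + β.val + 1) = l0 := by
      intro β hβ
      obtain ⟨-, h | h⟩ := hβ
      · exact h.1
      · exact absurd h.2 (fun hn => not_pos_neg (hstep (i + β.val)).2.1 hn)
    exact hinj1 x y ((f x hx).trans (f y hy).symm)

lemma stepDown_wf (R : Struct) (hC : R.Correct) :
    WellFounded (fun a b : R.Edge => StepUp R b a) := by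
  have hir : ∀ x : R.Edge, ¬ Relation.TransGen (fun a b : R.Edge => StepUp R b a) x x := by
    intro x hx
    exact stepUp_acyclic R hC x (Relation.transGen_swap.mp hx)
  haveI : IsIrrefl R.Edge (Relation.TransGen fun a b : R.Edge => StepUp R b a) := ⟨hir⟩
  have hwf := Finite.wellFounded_of_trans_of_irrefl
    (Relation.TransGen fun a b : R.Edge => StepUp R b a)
  exact @Subrelation.wf R.Edge (Relation.TransGen fun a b : R.Edge => StepUp R b a)
    (fun a b : R.Edge => StepUp R b a) (fun h => Relation.TransGen.single h) hwf

end Acyclic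

section Fire

open Classical

variable {R : Struct}

lemma sort_src_of_typ_bot (hWF : R.WF) {g : R.Edge} (h : R.typ g = .bot)
    (hax : R.sort (R.src g) ≠ .ax) (hbot : R.sort (R.src g) ≠ .bot) :
    R.sort (R.src g) = .sync := by
  cases hs : R.sort (R.src g) with
  | ax => exact absurd hs hax
  | cut => exact absurd hs (src_ne_cut hWF g)
  | tens => obtain ⟨A, B, hAB⟩ := typ_src_tens hWF hs; rw [h] at hAB; exact Formula.noConfusion hAB
  | parr => obtain ⟨A, B, hAB⟩ := typ_src_parr hWF hs; rw [h] at hAB; exact Formula.noConfusion hAB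
  | one => have := typ_src_one hWF hs; rw [h] at this; exact Formula.noConfusion this
  | bot => exact absurd hs hbot
  | sync => rfl

lemma sort_src_of_typ_parr (hWF : R.WF) {g : R.Edge} {A B : Formula}
    (h : R.typ g = .parr A B) (hax : R.sort (R.src g) ≠ .ax)
    (hbot : R.sort (R.src g) ≠ .bot) (hsy : R.sort (R.src g) ≠ .sync) :
    R.sort (R.src g) = .parr := by
  cases hs : R.sort (R.src g) with
  | ax => exact absurd hs hax
  | cut => exact absurd hs (src_ne_cut hWF g)
  | tens => obtain ⟨A', B', hAB⟩ := typ_src_tens hWF hs; rw [h] at hAB; exact Formula.noConfusion hAB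
  | parr => rfl
  | one => have := typ_src_one hWF hs; rw [h] at this; exact Formula.noConfusion this
  | bot => exact absurd hs hbot
  | sync => exact absurd hs hsy

lemma sort_src_of_typ_tens (hWF : R.WF) {g : R.Edge} {A B : Formula}
    (h : R.typ g = .tens A B) (hax : R.sort (R.src g) ≠ .ax)
    (hbot : R.sort (R.src g) ≠ .bot) (hsy : R.sort (R.src g) ≠ .sync) :
    R.sort (R.src g) = .tens := by
  cases hs : R.sort (R.src g) with
  | ax => exact absurd hs hax
  | cut => exact absurd hs (src_ne_cut hWF g)
  | tens => rfl
  | parr => obtain ⟨A', B', hAB⟩ := typ_src_parr hWF hs; rw [h] at hAB; exact Formula.noConfusion hAB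
  | one => have := typ_src_one hWF hs; rw [h] at this; exact Formula.noConfusion this
  | bot => exact absurd hs hbot
  | sync => exact absurd hs hsy

lemma no_src_of_typ_var (hWF : R.WF) {g : R.Edge} {n : ℕ} (h : R.typ g = .var n)
    (hax : R.sort (R.src g) ≠ .ax) (hbot : R.sort (R.src g) ≠ .bot) : False := by
  cases hs : R.sort (R.src g) with
  | ax => exact absurd hs hax
  | cut => exact absurd hs (src_ne_cut hWF g)
  | tens => obtain ⟨A, B, hAB⟩ := typ_src_tens hWF hs; rw [h] at hAB; exact Formula.noConfusion hAB
  | parr => obtain ⟨A, B, hAB⟩ := typ_src_parr hWF hs; rw [h] at hAB; exact Formula.noConfusion hAB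
  | one => have := typ_src_one hWF hs; rw [h] at this; exact Formula.noConfusion this
  | bot => exact absurd hs hbot
  | sync =>
    rcases polarized_src_sync hWF hs with hp | hn
    · rw [h] at hp; nomatch hp
    · rw [h] at hn; nomatch hn

lemma no_src_of_typ_covar (hWF : R.WF) {g : R.Edge} {n : ℕ} (h : R.typ g = .covar n)
    (hax : R.sort (R.src g) ≠ .ax) (hbot : R.sort (R.src g) ≠ .bot) : False := by
  cases hs : R.sort (R.src g) with
  | ax => exact absurd hs hax
  | cut => exact absurd hs (src_ne_cut hWF g)
  | tens => obtain ⟨A, B, hAB⟩ := typ_src_tens hWF hs; rw [h] at hAB; exact Formula.noConfusion hAB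
  | parr => obtain ⟨A, B, hAB⟩ := typ_src_parr hWF hs; rw [h] at hAB; exact Formula.noConfusion hAB
  | one => have := typ_src_one hWF hs; rw [h] at this; exact Formula.noConfusion this
  | bot => exact absurd hs hbot
  | sync =>
    rcases polarized_src_sync hWF hs with hp | hn
    · rw [h] at hp; nomatch hp
    · rw [h] at hn; nomatch hn

lemma fire_axcut (hWF : R.WF) (hC : R.Correct) {c : R.Node} {e f : R.Edge}
    (sc : R.sort c = .cut) (bc : R.box c = none) (hef : e ≠ f)
    (pc : R.prems c = {e, f}) (hHe : ¬ R.HereditaryBoxConcl e)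
    (hax : R.sort (R.src e) = .ax) : ∃ Q, AxCutStep R Q := by
  have hba := (notHBC_box hHe).2
  have hte : R.tgt e = some c := mem_prems_iff.1 (by rw [pc]; simp)
  have htf : R.tgt f = some c := mem_prems_iff.1 (by rw [pc]; simp)
  obtain ⟨hpa, e0, f0, hef0, hca, -⟩ := hWF.1 _ hax
  have hac : R.src e ≠ c := fun h => by rw [h, sc] at hax; exact LinkSort.noConfusion hax
  have he0 := mem_concls_self (R := R) e
  obtain ⟨u, hca', heu⟩ : ∃ u, R.concls (R.src e) = {e, u} ∧ e ≠ u := by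
    rw [hca] at he0
    rcases pair_cases he0 with h | h
    · exact ⟨f0, by rw [hca, h], by rw [h]; exact hef0⟩
    · exact ⟨e0, by rw [hca, h, Finset.pair_comm], by rw [h]; exact fun hh => hef0 hh.symm⟩
  have hsu : R.src u = R.src e := by
    apply mem_concls_iff.1
    rw [hca']; simp
  have huf : u ≠ f := by
    intro h
    subst h
    refine no_two_cycle hC hac heu
      (connectsAt_of rfl hte hba bc)
      (connectsAt_of hsu htf hba bc) ?_ ?_
    · intro p hp hh
      obtain ⟨h1, -⟩ := hh
      rw [hte, Option.some_inj] at h1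
      rw [← h1, sc] at hp
      exact LinkSort.noConfusion hp
    · intro s hss hh
      obtain ⟨⟨-, h1⟩, -⟩ := hh
      rcases h1 with ⟨h2, -⟩ | ⟨h2, -⟩
      · rw [← h2, hax] at hss; exact LinkSort.noConfusion hss
      · rw [hte, Option.some_inj] at h2
        rw [← h2, sc] at hss
        exact LinkSort.noConfusion hss
  exact mk_axcut hax sc hba bc heu hef huf hca' pc
    (fun x hx => by
      have : x ∈ R.prems (R.src e) := mem_prems_iff.2 hx
      rw [hpa] at this
      exact Finset.notMem_empty _ this)
    (fun x hx => by
      have : x ∈ R.concls c := mem_concls_iff.2 hx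
      rw [(hWF.2.1 _ sc).1] at this
      exact Finset.notMem_empty _ this)
    (fun n b hb => by
      have hbb := box_sort_bot hWF hb
      constructor
      · intro h; rw [h, hax] at hbb; exact LinkSort.noConfusion hbb
      · intro h; rw [h, sc] at hbb; exact LinkSort.noConfusion hbb)

lemma fire_synccut (hWF : R.WF) {c : R.Node} {d' q : R.Edge}
    (sc : R.sort c = .cut) (bc : R.box c = none) (hne : d' ≠ q)
    (pc : R.prems c = {d', q}) (hH : ¬ R.HereditaryBoxConcl d')
    (hneg : (R.typ d').Negative) (hsy : R.sort (R.src d') = .sync) :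
    ∃ Q, SyncCutStep R Q := by
  have bl := (notHBC_box hH).2
  have htd' : R.tgt d' = some c := mem_prems_iff.1 (by rw [pc]; simp)
  have htq : R.tgt q = some c := mem_prems_iff.1 (by rw [pc]; simp)
  obtain ⟨d, htd, hpd, -⟩ := sync_prem_of_concl hWF hsy rfl
  have hlc : R.src d' ≠ c := fun h => by rw [h, sc] at hsy; exact LinkSort.noConfusion hsy
  have hdq : d ≠ q := fun h => hlc (Option.some_inj.mp (by rw [← htd, h, htq]))
  have hdd' : d ≠ d' := fun h => hlc (Option.some_inj.mp (by rw [← htd, h, htd']))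
  obtain ⟨j, hj⟩ := fresh_idx R
  exact mk_synccut hsy sc bl bc hneg rfl htd' htd hpd hne hdq hdd' pc
    (fun e _ => (hj e).1) (fun e _ => (hj e).2.1)

lemma fire_tensparr (hWF : R.WF) {c : R.Node} {s s' : R.Edge}
    (sc : R.sort c = .cut) (bc : R.box c = none) (hss' : s ≠ s')
    (pc : R.prems c = {s, s'}) (hHs : ¬ R.HereditaryBoxConcl s)
    (hHs' : ¬ R.HereditaryBoxConcl s')
    (st : R.sort (R.src s) = .tens) (sp : R.sort (R.src s') = .parr) :
    ∃ Q, TensParrStep R Q := by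
  have bt := (notHBC_box hHs).2
  have bp := (notHBC_box hHs').2
  obtain ⟨a1, a2, g0, ha, pt, hpa1, hpa2, hct0, -⟩ := hWF.2.2.1 _ st
  obtain ⟨b1, b2, g1, hb, pp, hpb1, hpb2, hcp0, -⟩ := hWF.2.2.2.1 _ sp
  have hs0 : s = g0 := by
    have := mem_concls_self (R := R) s
    rw [hct0, Finset.mem_singleton] at this
    exact this
  have hs1 : s' = g1 := by
    have := mem_concls_self (R := R) s'
    rw [hcp0, Finset.mem_singleton] at this
    exact this
  have hct : R.concls (R.src s) = {s} := by rw [hct0, hs0]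
  have hcp : R.concls (R.src s') = {s'} := by rw [hcp0, hs1]
  have htp : R.src s ≠ R.src s' := fun h => by
    rw [h, sp] at st; exact LinkSort.noConfusion st
  have hc_t : c ≠ R.src s := fun h => by rw [← h, sc] at st; exact LinkSort.noConfusion st
  have hc_p : c ≠ R.src s' := fun h => by rw [← h, sc] at sp; exact LinkSort.noConfusion sp
  exact mk_tensparr sc st sp bc bt bp hss' pc hct hcp ha pt hpa1 hpa2 hb pp hpb1 hpb2
    htp hc_t hc_p
    (fun n b hbx => by
      have hbb := box_sort_bot hWF hbx
      constructor
      · intro h; rw [h, st] at hbb; exact LinkSort.noConfusion hbb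
      · intro h; rw [h, sp] at hbb; exact LinkSort.noConfusion hbb)

lemma climb (hWF : R.WF) (hC : R.Correct) :
    ∀ g : R.Edge, (∃ A B, R.typ g = .tens A B) → (R.typ g).Positive →
      ¬ R.HereditaryBoxConcl g → R.sort (R.src g) = .sync → ∃ Q, Step R Q := by
  intro g0
  induction g0 using (stepDown_wf R hC).induction with
  | _ g IH =>
    intro hshape hpos hHBC hsync
    have hFB := notHBC_box hHBC
    obtain ⟨g', htg', hpg', htypg'⟩ := sync_prem_of_concl hWF hsync rfl
    have hstep : R.SyncStepE g' g := ⟨R.src g, hsync, htg', rfl, hpg'.symm⟩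
    have hHBC' := notHBC_step hHBC hstep
    have hFB' := notHBC_box hHBC'
    have hpos' : (R.typ g').Positive := by rw [htypg']; exact hpos
    obtain ⟨A, B, hAB⟩ := hshape
    have hshape' : R.typ g' = .tens A B := by rw [htypg', hAB]
    have hfin1 : ∀ a b : Fin (0 + 1), a = b := by
      intro a b
      have ha := a.isLt
      have hb := b.isLt
      exact Fin.ext (by omega)
    have hne_src : R.src g' ≠ R.src g := by
      intro h
      apply hC none
      refine ⟨0, fun _ => R.src g, fun _ => g', fun a b _ => hfin1 a b,
        fun a b _ => hfin1 a b, ?_, ?_, ?_⟩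
      · intro i
        exact ⟨R.src g, htg', Or.inl hFB.2,
          Or.inl ⟨Or.inl ⟨hFB'.2, h.symm⟩, Or.inl ⟨hFB.2, rfl⟩⟩⟩
      · intro p _
        intro a _ b _
        exact hfin1 a b
      · intro l0 _
        intro a _ b _
        exact hfin1 a b
    cases hsort' : R.sort (R.src g') with
    | cut => exact absurd hsort' (src_ne_cut hWF g')
    | one =>
      have := typ_src_one hWF hsort'
      rw [hshape'] at this
      exact Formula.noConfusion this
    | bot => exact absurd hsort' hFB'.1
    | parr =>
      obtain ⟨A', B', hAB'⟩ := typ_src_parr hWF hsort'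
      rw [hshape'] at hAB'
      exact Formula.noConfusion hAB'
    | sync =>
      exact IH g' ⟨hpos, hpos', hsync, hFB.2, hFB'.2, htg', hpg'⟩
        ⟨A, B, hshape'⟩ hpos' hHBC' hsort'
    | ax =>
      obtain ⟨hpa, e0, f0, hef0, hca, -⟩ := hWF.1 _ hsort'
      have hg'mem := mem_concls_self (R := R) g'
      obtain ⟨v, hcav, hg'v⟩ : ∃ v, R.concls (R.src g') = {g', v} ∧ g' ≠ v := by
        rw [hca] at hg'mem
        rcases pair_cases hg'mem with h | h
        · exact ⟨f0, by rw [hca, h], by rw [h]; exact hef0⟩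
        · exact ⟨e0, by rw [hca, h, Finset.pair_comm], by rw [h]; exact fun hh => hef0 hh.symm⟩
      have hsv : R.src v = R.src g' := by
        apply mem_concls_iff.1
        rw [hcav]; simp
      have hla : R.src g ≠ R.src g' := fun h => hne_src h.symm
      obtain ⟨j, hj⟩ := fresh_idx R
      obtain ⟨Q, hQ⟩ := mk_syncax hsync hsort' hFB.2 hFB'.2 hpos' hg'v hcav htg' rfl
        hpg'.symm (fun h => hla (congrArg R.src h)) (fun h => hla (by rw [h]; exact hsv))
        hsv (fun e _ => (hj e).1) (fun e _ => (hj e).2.1)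
      exact ⟨Q, Or.inr (Or.inr (Or.inl (Or.inr (Or.inl hQ))))⟩
    | tens =>
      obtain ⟨x, y, g1, hxy, pm, hpx, hpy, hcm, -⟩ := hWF.2.2.1 _ hsort'
      have htx : R.tgt x = some (R.src g') := mem_prems_iff.1 (by rw [pm]; simp)
      have hty : R.tgt y = some (R.src g') := mem_prems_iff.1 (by rw [pm]; simp)
      have hxz : x ≠ g' := fun h =>
        hne_src (Option.some_inj.mp
          (show some (R.src g') = some (R.src g) by rw [← htx, h]; exact htg'))
      have hyz : y ≠ g' := fun h =>
        hne_src (Option.some_inj.mp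
          (show some (R.src g') = some (R.src g) by rw [← hty, h]; exact htg'))
      have hwz : g ≠ g' := fun h => hne_src (congrArg R.src h).symm
      have hout : ∀ s0, R.sort s0 = .sync →
          ¬(R.OutEdgeOf s0 g' ∧ R.OutEdgeOf s0 g) := by
        intro s0 hss hh
        obtain ⟨⟨-, h1⟩, -⟩ := hh
        rcases h1 with ⟨h2, -⟩ | ⟨-, h2⟩
        · rw [← h2, hsort'] at hss; exact LinkSort.noConfusion hss
        · exact not_pos_neg hpos' h2
      have hparr2 : ∀ p, R.sort p = .parr →
          ¬(R.tgt g' = some p ∧ R.tgt g = some p) := by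
        intro p hp hh
        obtain ⟨h1, -⟩ := hh
        rw [htg', Option.some_inj] at h1
        rw [← h1, hsync] at hp
        exact LinkSort.noConfusion hp
      have hwx : g ≠ x := by
        intro h
        exact no_two_cycle hC hne_src (fun hh => hwz hh.symm)
          (connectsAt_of rfl htg' hFB'.2 hFB.2)
          (connectsAt_comm (connectsAt_of rfl
            (show R.tgt g = some (R.src g') by rw [h]; exact htx) hFB.2 hFB'.2))
          hparr2 hout
      have hwy : g ≠ y := by
        intro h
        exact no_two_cycle hC hne_src (fun hh => hwz hh.symm)
          (connectsAt_of rfl htg' hFB'.2 hFB.2)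
          (connectsAt_comm (connectsAt_of rfl
            (show R.tgt g = some (R.src g') by rw [h]; exact hty) hFB.2 hFB'.2))
          hparr2 hout
      obtain ⟨j, hj⟩ := fresh_idx R
      obtain ⟨Q, hQ⟩ := mk_syncmult hsync (Or.inl hsort') hFB.2 hFB'.2 rfl htg' rfl
        hpg'.symm hxy pm hpx hpy (by omega)
        (fun e _ => ⟨(hj e).1, (hj e).2.2.1⟩)
        (fun e _ => ⟨(hj e).2.1, (hj e).2.2.2⟩)
        hxz hyz hwz hwx hwy
      exact ⟨Q, Or.inr (Or.inr (Or.inl (Or.inl hQ)))⟩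

end Fire

/-- **Ready cuts can be fired.**  If an SMLL net `R` contains a ready cut — a
cut link at depth 0 neither of whose premisses is a hereditary conclusion of
a box — then `R` is not a normal form of the reduction relation `→`. -/
theorem smll_ready_cut_not_normal (R : Struct) (hWF : R.WF) (hC : R.Correct)
    (c : R.Node) (hc : R.ReadyCut c) : ∃ Q : Struct, Step R Q := by
  classical
  obtain ⟨sc, bc, hready⟩ := hc
  obtain ⟨-, e, f, hef, pc, hdual⟩ := hWF.2.1 c sc
  have hHe : ¬ R.HereditaryBoxConcl e := hready e (by rw [pc]; simp)
  have hHf : ¬ R.HereditaryBoxConcl f := hready f (by rw [pc]; simp)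
  have hnbe := (notHBC_box hHe).1
  have hnbf := (notHBC_box hHf).1
  by_cases hax_e : R.sort (R.src e) = .ax
  · obtain ⟨Q, hQ⟩ := fire_axcut hWF hC sc bc hef pc hHe hax_e
    exact ⟨Q, Or.inl hQ⟩
  by_cases hax_f : R.sort (R.src f) = .ax
  · obtain ⟨Q, hQ⟩ := fire_axcut hWF hC sc bc (Ne.symm hef)
      (by rw [pc, Finset.pair_comm]) hHf hax_f
    exact ⟨Q, Or.inl hQ⟩
  cases hte : R.typ e with
  | one =>
    have hdf : R.typ f = .bot := by rw [hdual, hte]; rfl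
    have hsf := sort_src_of_typ_bot hWF hdf hax_f hnbf
    obtain ⟨Q, hQ⟩ := fire_synccut hWF sc bc (Ne.symm hef)
      (by rw [pc, Finset.pair_comm]) hHf (by rw [hdf]; exact .bot) hsf
    exact ⟨Q, Or.inr (Or.inr (Or.inl (Or.inr (Or.inr (Or.inl hQ)))))⟩
  | bot =>
    have hse := sort_src_of_typ_bot hWF hte hax_e hnbe
    obtain ⟨Q, hQ⟩ := fire_synccut hWF sc bc hef pc hHe (by rw [hte]; exact .bot) hse
    exact ⟨Q, Or.inr (Or.inr (Or.inl (Or.inr (Or.inr (Or.inl hQ)))))⟩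
  | var n => exact (no_src_of_typ_var hWF hte hax_e hnbe).elim
  | covar n => exact (no_src_of_typ_covar hWF hte hax_e hnbe).elim
  | tens A B =>
    have hdf : R.typ f = .parr A.dual B.dual := by rw [hdual, hte]; rfl
    by_cases hsf : R.sort (R.src f) = .sync
    · have hneg : (R.typ f).Negative := by
        rcases polarized_src_sync hWF hsf with hp | hn
        · rw [hdf] at hp; nomatch hp
        · exact hn
      obtain ⟨Q, hQ⟩ := fire_synccut hWF sc bc (Ne.symm hef)
        (by rw [pc, Finset.pair_comm]) hHf hneg hsf
      exact ⟨Q, Or.inr (Or.inr (Or.inl (Or.inr (Or.inr (Or.inl hQ)))))⟩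
    · have hpf := sort_src_of_typ_parr hWF hdf hax_f hnbf hsf
      by_cases hse : R.sort (R.src e) = .sync
      · have hpose : (R.typ e).Positive := by
          rcases polarized_src_sync hWF hse with hp | hn
          · exact hp
          · rw [hte] at hn; nomatch hn
        exact climb hWF hC e ⟨A, B, hte⟩ hpose hHe hse
      · have hset := sort_src_of_typ_tens hWF hte hax_e hnbe hse
        obtain ⟨Q, hQ⟩ := fire_tensparr hWF sc bc hef pc hHe hHf hset hpf
        exact ⟨Q, Or.inr (Or.inl hQ)⟩
  | parr A B =>
    have hdf : R.typ f = .tens A.dual B.dual := by rw [hdual, hte]; rfl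
    by_cases hse : R.sort (R.src e) = .sync
    · have hneg : (R.typ e).Negative := by
        rcases polarized_src_sync hWF hse with hp | hn
        · rw [hte] at hp; nomatch hp
        · exact hn
      obtain ⟨Q, hQ⟩ := fire_synccut hWF sc bc hef pc hHe hneg hse
      exact ⟨Q, Or.inr (Or.inr (Or.inl (Or.inr (Or.inr (Or.inl hQ)))))⟩
    · have hpe := sort_src_of_typ_parr hWF hte hax_e hnbe hse
      by_cases hsf : R.sort (R.src f) = .sync
      · have hposf : (R.typ f).Positive := by
          rcases polarized_src_sync hWF hsf with hp | hn
          · exact hp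
          · rw [hdf] at hn; nomatch hn
        exact climb hWF hC f ⟨A.dual, B.dual, hdf⟩ hposf hHf hsf
      · have hsft := sort_src_of_typ_tens hWF hdf hax_f hnbf hsf
        obtain ⟨Q, hQ⟩ := fire_tensparr hWF sc bc (Ne.symm hef)
          (by rw [pc, Finset.pair_comm]) hHf hHe hsft hpe
        exact ⟨Q, Or.inr (Or.inl hQ)⟩
end
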